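/- arXiv:1307.4530 — 5 statements merged into one kernel-verified Lean document; each statement's English description precedes it below -/
import Mathlib

section
/- Let A be a finite subset of ℤ, spectral with spectrum Γ, and let U_Γ(t) = F* D_Γ(t) F be the associated one-parameter family of unitary matrices. Then U_Γ(a−a') δ_a = δ_{a'} for all a, a' ∈ A; in particular B = U_Γ(1) is a local translation matrix for A. -/
open Complex Real Matrix

noncomputable section

/-- `Γ ⊂ ℝ` is a spectrum for the finite set `A ⊂ ℤ`. -/
def IsSpectrumFor (A : Finset ℤ) (Γ : Finset ℝ) : Prop :=
  Γ.card = A.card ∧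
  ∀ a ∈ A, ∀ a' ∈ A,
    ∑ γ ∈ Γ, Complex.exp (2 * Real.pi * Complex.I * (((a : ℤ) : ℂ) - ((a' : ℤ) : ℂ)) * (γ : ℂ)) =
      if a = a' then (A.card : ℂ) else 0

/-- The Fourier matrix `F = (1/√N)(e^{−2πiλa})_{λ∈Γ, a∈A}`. -/
def Fmat (A : Finset ℤ) (Γ : Finset ℝ) : Matrix Γ A ℂ := fun γ a =>
  (1 / Real.sqrt A.card : ℝ) *
    Complex.exp (-(2 * Real.pi * Complex.I) * ((γ : ℝ) : ℂ) * ((a : ℤ) : ℂ))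

/-- The diagonal matrix `D_Γ(t)` with entries `e^{2πiλt}`, `λ ∈ Γ`. -/
def Dmat (Γ : Finset ℝ) (t : ℝ) : Matrix Γ Γ ℂ :=
  Matrix.diagonal fun γ => Complex.exp (2 * Real.pi * Complex.I * ((γ : ℝ) : ℂ) * (t : ℂ))

/-- The group of local translations `U_Γ(t) = F* D_Γ(t) F` associated to the spectrum `Γ`. -/
def Umat (A : Finset ℤ) (Γ : Finset ℝ) (t : ℝ) : Matrix A A ℂ :=
  (Fmat A Γ)ᴴ * Dmat Γ t * Fmat A Γ

lemma Umat_apply (A : Finset ℤ) (Γ : Finset ℝ) (t : ℝ) (b a : A) :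
    Umat A Γ t b a = (1 / (A.card : ℂ)) *
      ∑ γ : Γ, Complex.exp (2 * Real.pi * Complex.I *
        ((((b : ℤ) : ℂ) - ((a : ℤ) : ℂ)) + (t : ℂ)) * ((γ : ℝ) : ℂ)) := by
  rw [Umat, Matrix.mul_assoc, Matrix.mul_apply, Finset.mul_sum]
  refine Finset.sum_congr rfl fun γ _ => ?_
  rw [Matrix.conjTranspose_apply, Dmat, Matrix.diagonal_mul]
  have hstar : star (Fmat A Γ γ b) =
      ((1 / Real.sqrt A.card : ℝ) : ℂ) *
        Complex.exp (2 * Real.pi * Complex.I * ((γ : ℝ) : ℂ) * ((b : ℤ) : ℂ)) := by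
    show (starRingEnd ℂ) _ = _
    rw [Fmat, _root_.map_mul, Complex.conj_ofReal, ← Complex.exp_conj]
    congr 2
    simp only [_root_.map_mul, map_neg, Complex.conj_I, Complex.conj_ofReal, map_ofNat,
      map_intCast]
    ring
  have hr : ((1 / Real.sqrt A.card : ℝ) : ℂ) * ((1 / Real.sqrt A.card : ℝ) : ℂ) =
      1 / (A.card : ℂ) := by
    rw [← Complex.ofReal_mul, div_mul_div_comm, one_mul,
      Real.mul_self_sqrt (Nat.cast_nonneg _)]
    push_cast; ring
  have hexp : Complex.exp (2 * Real.pi * Complex.I *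
        ((((b : ℤ) : ℂ) - ((a : ℤ) : ℂ)) + (t : ℂ)) * ((γ : ℝ) : ℂ)) =
      Complex.exp (2 * Real.pi * Complex.I * ((γ : ℝ) : ℂ) * ((b : ℤ) : ℂ)) *
      Complex.exp (2 * Real.pi * Complex.I * ((γ : ℝ) : ℂ) * (t : ℂ)) *
      Complex.exp (-(2 * Real.pi * Complex.I) * ((γ : ℝ) : ℂ) * ((a : ℤ) : ℂ)) := by
    rw [← Complex.exp_add, ← Complex.exp_add]
    congr 1
    ring
  rw [hstar, hexp, Fmat]
  rw [← hr]
  ring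

variable {A : Finset ℤ} {Γ : Finset ℝ}

lemma Umat_zero (h : IsSpectrumFor A Γ) : Umat A Γ 0 = 1 := by
  ext b a
  rw [Umat_apply]
  have hs := h.2 b.1 b.2 a.1 a.2
  have hsum : (∑ γ : Γ, Complex.exp (2 * Real.pi * Complex.I *
        ((((b : ℤ) : ℂ) - ((a : ℤ) : ℂ)) + ((0 : ℝ) : ℂ)) * ((γ : ℝ) : ℂ))) =
      ∑ γ ∈ Γ, Complex.exp (2 * Real.pi * Complex.I *
        ((((b : ℤ) : ℂ) - ((a : ℤ) : ℂ))) * ((γ : ℝ) : ℂ)) := by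
    rw [← Finset.sum_coe_sort Γ]
    exact Finset.sum_congr rfl fun γ _ => by push_cast; ring_nf
  rw [hsum, hs, Matrix.one_apply]
  have hcard : (A.card : ℂ) ≠ 0 := by
    have : 0 < A.card := Finset.card_pos.2 ⟨b.1, b.2⟩
    exact_mod_cast this.ne'
  by_cases hba : b = a
  · simp [hba, hcard, Subtype.ext_iff]
  · have : (b : ℤ) ≠ (a : ℤ) := fun e => hba (Subtype.ext e)
    simp [hba, this]

lemma FHF (h : IsSpectrumFor A Γ) : (Fmat A Γ)ᴴ * Fmat A Γ = 1 := by
  have h0 := Umat_zero h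
  have hD : Dmat Γ 0 = 1 := by
    simp [Dmat]
  rwa [Umat, hD, Matrix.mul_one] at h0

lemma FFH (h : IsSpectrumFor A Γ) : Fmat A Γ * (Fmat A Γ)ᴴ = 1 := by
  have e : (Γ : Type) ≃ (A : Type) :=
    Fintype.equivOfCardEq (by simpa [Fintype.card_coe] using h.1)
  exact (Matrix.mul_eq_one_comm_of_equiv e).2 (FHF h)

lemma Umat_mul (h : IsSpectrumFor A Γ) (s t : ℝ) :
    Umat A Γ s * Umat A Γ t = Umat A Γ (s + t) := by
  have hD : Dmat Γ s * Dmat Γ t = Dmat Γ (s + t) := by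
    rw [Dmat, Dmat, Dmat, Matrix.diagonal_mul_diagonal]
    refine congrArg Matrix.diagonal (funext fun γ => ?_)
    rw [← Complex.exp_add]
    congr 1
    push_cast; ring
  rw [Umat, Umat, Umat]
  rw [Matrix.mul_assoc ((Fmat A Γ)ᴴ * Dmat Γ s) (Fmat A Γ) _,
    ← Matrix.mul_assoc (Fmat A Γ) ((Fmat A Γ)ᴴ * Dmat Γ t) (Fmat A Γ),
    ← Matrix.mul_assoc (Fmat A Γ) ((Fmat A Γ)ᴴ) (Dmat Γ t), FFH h, Matrix.one_mul,
    ← Matrix.mul_assoc ((Fmat A Γ)ᴴ * Dmat Γ s) (Dmat Γ t) (Fmat A Γ),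
    Matrix.mul_assoc ((Fmat A Γ)ᴴ) (Dmat Γ s) (Dmat Γ t), hD]

lemma Umat_star (t : ℝ) : star (Umat A Γ t) = Umat A Γ (-t) := by
  have hD : (Dmat Γ t)ᴴ = Dmat Γ (-t) := by
    rw [Dmat, Dmat, Matrix.diagonal_conjTranspose]
    refine congrArg Matrix.diagonal (funext fun γ => ?_)
    simp only [Pi.star_apply]
    show (starRingEnd ℂ) _ = _
    rw [← Complex.exp_conj]
    congr 1
    simp only [_root_.map_mul, Complex.conj_I, Complex.conj_ofReal, map_ofNat]
    push_cast; ring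
  rw [Umat, Umat, Matrix.star_eq_conjTranspose, Matrix.conjTranspose_mul,
    Matrix.conjTranspose_mul, Matrix.conjTranspose_conjTranspose, hD, Matrix.mul_assoc]

lemma Umat_pow (h : IsSpectrumFor A Γ) (k : ℕ) : (Umat A Γ 1) ^ k = Umat A Γ k := by
  induction k with
  | zero => simpa using (Umat_zero h).symm
  | succ n ih =>
      rw [pow_succ, ih, Umat_mul h]
      norm_num

lemma Umat_zpow (h : IsSpectrumFor A Γ) (n : ℤ) : (Umat A Γ 1) ^ n = Umat A Γ (n : ℝ) := by
  cases n with
  | ofNat k => rw [Int.ofNat_eq_coe, zpow_natCast, Umat_pow h]; norm_num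
  | negSucc k =>
      rw [zpow_negSucc, Umat_pow h]
      have h1 : Umat A Γ ((k : ℝ) + 1) * Umat A Γ (-((k : ℝ) + 1)) = 1 := by
        rw [Umat_mul h, add_neg_cancel, Umat_zero h]
      rw [show ((k + 1 : ℕ) : ℝ) = (k : ℝ) + 1 by push_cast; ring,
        Matrix.inv_eq_right_inv h1, Int.cast_negSucc]
      norm_num

/-- if `Γ` is a spectrum for `A`, then `U_Γ(a−a') δ_a = δ_{a'}` for all
`a, a' ∈ A`; in particular `B = U_Γ(1)` is a local translation matrix for `A` (a unitary matrix
with `B^{a−a'} δ_a = δ_{a'}`). -/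
theorem Umat_is_group_of_local_translations (A : Finset ℤ) (Γ : Finset ℝ)
    (h : IsSpectrumFor A Γ) :
    (∀ a a' : A, (Umat A Γ (((a : ℤ) : ℝ) - ((a' : ℤ) : ℝ))).mulVec (Pi.single a 1) =
      Pi.single a' 1) ∧
    Umat A Γ 1 ∈ Matrix.unitaryGroup A ℂ ∧
    ∀ a a' : A, ((Umat A Γ 1) ^ ((a : ℤ) - (a' : ℤ))).mulVec (Pi.single a 1) =
      Pi.single a' 1 := by
  have part1 : ∀ a a' : A, (Umat A Γ (((a : ℤ) : ℝ) - ((a' : ℤ) : ℝ))).mulVec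
      (Pi.single a 1) = Pi.single a' 1 := by
    intro a a'
    funext b
    rw [Matrix.mulVec_single]
    show Umat A Γ _ b a * 1 = _
    rw [Umat_apply, mul_one]
    have hsum : (∑ γ : Γ, Complex.exp (2 * Real.pi * Complex.I *
          ((((b : ℤ) : ℂ) - ((a : ℤ) : ℂ)) + ((((a : ℤ) : ℝ) - ((a' : ℤ) : ℝ) : ℝ) : ℂ)) *
          ((γ : ℝ) : ℂ))) =
        ∑ γ ∈ Γ, Complex.exp (2 * Real.pi * Complex.I *
          ((((b : ℤ) : ℂ) - (((a' : ℤ)) : ℂ))) * ((γ : ℝ) : ℂ)) := by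
      rw [← Finset.sum_coe_sort Γ]
      refine Finset.sum_congr rfl fun γ _ => ?_
      congr 1
      push_cast; ring
    rw [hsum, h.2 b.1 b.2 a'.1 a'.2]
    have hcard : (A.card : ℂ) ≠ 0 := by
      have : 0 < A.card := Finset.card_pos.2 ⟨b.1, b.2⟩
      exact_mod_cast this.ne'
    by_cases hba : b = a'
    · simp [hba, hcard, Pi.single_apply]
    · have : (b : ℤ) ≠ (a' : ℤ) := fun e => hba (Subtype.ext e)
      simp [hba, this, Pi.single_apply]
  refine ⟨part1, ?_, ?_⟩
  · rw [Matrix.mem_unitaryGroup_iff, Matrix.star_eq_conjTranspose,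
      ← Matrix.star_eq_conjTranspose, Umat_star, Umat_mul h]
    simpa using Umat_zero h
  · intro a a'
    rw [Umat_zpow h,
      show (((a : ℤ) - (a' : ℤ) : ℤ) : ℝ) = ((a : ℤ) : ℝ) - ((a' : ℤ) : ℝ) by push_cast; ring]
    exact part1 a a'
end
end

section
/- Let A, L ⊂ ℤ with |A| = |L| = 4 and 0 ∈ A, 0 ∈ L, and let R ≥ 1 be an integer. Then (1/R)·L is a spectrum for A if and only if R = 2^{C+M+a+1}·d, A = 2^C·{0, 2^a c_1, c_2, c_2 + 2^a c_3}, and L = 2^M·{0, n_1, n_1 + 2^a n_2, 2^a n_3}, where c_1, c_2, c_3, n_1, n_2, n_3 are odd integers, a is a positive integer, C and M are nonnegative integers, and d divides c_1·n, c_3·n, n_2·c, and n_3·c, where c = gcd(c_1, c_2, c_3) and n = gcd(n_1, n_2, n_3). -/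
set_option maxHeartbeats 1000000
open Complex Real
noncomputable section

/-- `Qd R δ ε`: `2δε` is an odd multiple of `R`. -/
def Qd (R δ ε : ℤ) : Prop := ∃ k : ℤ, Odd k ∧ 2 * δ * ε = k * R

/-- The row condition in arithmetic form. -/
def Pd (R u v w δ : ℤ) : Prop :=
  (Qd R δ u ∧ Qd R δ (v - w)) ∨ (Qd R δ v ∧ Qd R δ (u - w)) ∨ (Qd R δ w ∧ Qd R δ (u - v))

lemma exists_odd_decomp (x : ℤ) (hx : x ≠ 0) : ∃ (s : ℕ) (y : ℤ), Odd y ∧ x = 2 ^ s * y := by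
  obtain ⟨k, m, hm, hx⟩ := Nat.exists_eq_pow_mul_and_not_dvd (n := x.natAbs)
    (by simpa using hx) 2 (by norm_num)
  have hmodd : Odd (m : ℤ) := by
    rw [Int.not_even_iff_odd.symm, Int.even_coe_nat]
    exact fun he => hm (even_iff_two_dvd.mp he)
  rcases Int.natAbs_eq x with h | h
  · exact ⟨k, m, hmodd, by rw [h, hx]; push_cast; ring⟩
  · exact ⟨k, -m, hmodd.neg, by rw [h, hx]; push_cast; ring⟩

lemma odd_decomp_uniq {s t : ℕ} {x y : ℤ} (h : 2 ^ s * x = 2 ^ t * y)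
    (hx : Odd x) (hy : Odd y) : s = t ∧ x = y := by
  have key : ∀ {s t : ℕ} {x y : ℤ}, 2 ^ s * x = 2 ^ t * y → Odd x → s ≤ t → s = t ∧ x = y := by
    intro s t x y h hx hst
    obtain ⟨j, rfl⟩ := Nat.exists_eq_add_of_le hst
    have h2 : x = 2 ^ j * y := by
      apply mul_left_cancel₀ (a := (2:ℤ)^s) (by positivity)
      rw [h, pow_add]; ring
    rcases Nat.eq_zero_or_pos j with hj | hj
    · subst hj; simp at h2; exact ⟨by omega, h2⟩
    · exfalso
      rw [Int.not_even_iff_odd.symm] at hx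
      have hp : (2:ℤ)^j = 2 * 2^(j-1) := by
        rw [← pow_succ']; congr 1; omega
      exact hx (even_iff_two_dvd.mpr ⟨2^(j-1) * y, by rw [h2, hp]; ring⟩)
  rcases le_total s t with hst | hst
  · exact key h hx hst
  · obtain ⟨h1, h2⟩ := key h.symm hy hst
    exact ⟨h1.symm, h2.symm⟩

/-- valuation bound: if `2^j ∣ 2^e * f` with `f` odd then `j ≤ e`. -/
lemma le_of_pow_dvd_odd {j e : ℕ} {f : ℤ} (h : (2:ℤ) ^ j ∣ 2 ^ e * f) (hf : Odd f) : j ≤ e := by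
  by_contra hc
  push_neg at hc
  obtain ⟨m, hm⟩ := h
  have hp : (2:ℤ)^j = 2^e * 2^(j-e) := by rw [← pow_add]; congr 1; omega
  have h2 : f = 2 ^ (j - e) * m := by
    apply mul_left_cancel₀ (a := (2:ℤ)^e) (by positivity)
    rw [hm, hp]; ring
  rw [Int.not_even_iff_odd.symm] at hf
  have hp2 : (2:ℤ)^(j-e) = 2 * 2^(j-e-1) := by
    rw [← pow_succ']; congr 1; omega
  exact hf (even_iff_two_dvd.mpr ⟨2^(j-e-1) * m, by rw [h2, hp2]; ring⟩)

lemma isCoprime_two_pow_of_odd {D : ℤ} (hD : Odd D) (a : ℕ) : IsCoprime ((2:ℤ) ^ a) D := by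
  apply IsCoprime.pow_left
  obtain ⟨m, rfl⟩ := hD
  exact ⟨-m, 1, by ring⟩

lemma odd_dvd_of_dvd_pow_mul {D x : ℤ} (hD : Odd D) {a : ℕ} (h : D ∣ 2 ^ a * x) : D ∣ x :=
  (isCoprime_two_pow_of_odd hD a).symm.dvd_of_dvd_mul_left h

lemma Qd_iff {ρ : ℕ} {D : ℤ} (hD : Odd D) {s t : ℕ} {x y : ℤ} (hx : Odd x) (hy : Odd y) :
    Qd (2 ^ ρ * D) (2 ^ s * x) (2 ^ t * y) ↔ (s + t + 1 = ρ ∧ D ∣ x * y) := by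
  constructor
  · rintro ⟨k, hk, he⟩
    have h2 : 2 ^ (s + t + 1) * (x * y) = 2 ^ ρ * (k * D) := by
      rw [pow_add, pow_add]; linear_combination he
    obtain ⟨h3, h4⟩ := odd_decomp_uniq h2 (Int.odd_mul.mpr ⟨hx, hy⟩) (Int.odd_mul.mpr ⟨hk, hD⟩)
    exact ⟨h3, ⟨k, by linarith⟩⟩
  · rintro ⟨h1, ⟨e, he⟩⟩
    have hodd : Odd e := (Int.odd_mul.mp (he ▸ Int.odd_mul.mpr ⟨hx, hy⟩)).2
    refine ⟨e, hodd, ?_⟩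
    subst h1
    rw [pow_add, pow_add]
    linear_combination (2:ℤ) ^ s * 2 ^ t * 2 * he

lemma Qd_neg_right {R δ ε : ℤ} (h : Qd R δ ε) : Qd R δ (-ε) := by
  obtain ⟨k, hk, he⟩ := h
  exact ⟨-k, hk.neg, by linear_combination -he⟩

lemma Qd_neg_left {R δ ε : ℤ} (h : Qd R δ ε) : Qd R (-δ) ε := by
  obtain ⟨k, hk, he⟩ := h
  exact ⟨-k, hk.neg, by linear_combination -he⟩

lemma Qd_congr_right {R δ ε ε' : ℤ} (h : ε' = -ε) (hq : Qd R δ ε) : Qd R δ ε' := h ▸ Qd_neg_right hq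

lemma Pd_swap12 {R u v w δ : ℤ} (h : Pd R u v w δ) : Pd R v u w δ := by
  rcases h with ⟨h1, h2⟩ | ⟨h1, h2⟩ | ⟨h1, h2⟩
  · exact Or.inr (Or.inl ⟨h1, h2⟩)
  · exact Or.inl ⟨h1, h2⟩
  · exact Or.inr (Or.inr ⟨h1, Qd_congr_right (by ring) h2⟩)

lemma Pd_swap23 {R u v w δ : ℤ} (h : Pd R u v w δ) : Pd R u w v δ := by
  rcases h with ⟨h1, h2⟩ | ⟨h1, h2⟩ | ⟨h1, h2⟩
  · exact Or.inl ⟨h1, Qd_congr_right (by ring) h2⟩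
  · exact Or.inr (Or.inr ⟨h1, h2⟩)
  · exact Or.inr (Or.inl ⟨h1, h2⟩)

lemma Pd_neg {R u v w δ : ℤ} (h : Pd R u v w δ) : Pd R u v w (-δ) := by
  rcases h with ⟨h1, h2⟩ | ⟨h1, h2⟩ | ⟨h1, h2⟩
  · exact Or.inl ⟨Qd_neg_left h1, Qd_neg_left h2⟩
  · exact Or.inr (Or.inl ⟨Qd_neg_left h1, Qd_neg_left h2⟩)
  · exact Or.inr (Or.inr ⟨Qd_neg_left h1, Qd_neg_left h2⟩)

lemma Pd_congr {R u v w δ δ' : ℤ} (h : δ' = -δ) (hp : Pd R u v w δ) : Pd R u v w δ' := h ▸ Pd_neg hp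

/-- The basic exponential `e^{2πi δ l / R}`. -/
def myE (R δ l : ℤ) : ℂ := Complex.exp (2 * (π:ℂ) * I * ((δ * l : ℤ) : ℂ) / (R : ℂ))

lemma exp_eq_neg_one_iff' {q : ℂ} :
    Complex.exp (2 * (π:ℂ) * I * q) = -1 ↔ ∃ n : ℤ, 2 * q = 2 * n + 1 := by
  have hπI : (π : ℂ) * I ≠ 0 :=
    mul_ne_zero (by exact_mod_cast Real.pi_ne_zero) I_ne_zero
  rw [show (2 * (π:ℂ) * I * q) = (2 * π * I * q - π * I) + π * I by ring, Complex.exp_add,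
    Complex.exp_pi_mul_I, mul_neg_one, neg_eq_iff_eq_neg, neg_neg, Complex.exp_eq_one_iff]
  constructor
  · rintro ⟨n, hn⟩
    refine ⟨n, ?_⟩
    have h0 : (π:ℂ) * I * (2 * q - (2 * n + 1)) = 0 := by linear_combination hn
    rcases mul_eq_zero.mp h0 with h | h
    · exact absurd h hπI
    · linear_combination h
  · rintro ⟨n, hn⟩
    exact ⟨n, by linear_combination ((π:ℂ) * I) * hn⟩

lemma myE_eq_neg_one_iff {R δ l : ℤ} (hR : 1 ≤ R) : myE R δ l = -1 ↔ Qd R δ l := by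
  have hR0 : (R : ℂ) ≠ 0 := by exact_mod_cast (by omega : R ≠ 0)
  rw [myE, show (2 * (π:ℂ) * I * ((δ * l : ℤ) : ℂ) / (R:ℂ)) = 2 * π * I * (((δ * l : ℤ):ℂ) / R) by
    ring, exp_eq_neg_one_iff']
  constructor
  · rintro ⟨n, hn⟩
    refine ⟨2 * n + 1, ⟨n, by ring⟩, ?_⟩
    have : (2 * (δ * l) : ℂ) = (2 * n + 1) * R := by
      field_simp at hn
      push_cast at hn
      linear_combination hn
    have := this
    exact_mod_cast (by push_cast; linear_combination this : ((2 * δ * l : ℤ) : ℂ) = (((2 * n + 1) * R : ℤ) : ℂ))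
  · rintro ⟨k, ⟨n, rfl⟩, hk⟩
    refine ⟨n, ?_⟩
    have h2 : ((2 * δ * l : ℤ) : ℂ) = (((2 * n + 1) * R : ℤ) : ℂ) := by rw [hk]
    push_cast at h2
    field_simp
    push_cast
    linear_combination h2

lemma myE_add {R δ : ℤ} (l l' : ℤ) : myE R δ (l + l') = myE R δ l * myE R δ l' := by
  rw [myE, myE, myE, ← Complex.exp_add]
  congr 1
  push_cast
  ring

lemma myE_neg {R δ : ℤ} (l : ℤ) : myE R δ (-l) = (myE R δ l)⁻¹ := by
  rw [myE, myE, ← Complex.exp_neg]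
  congr 1
  push_cast
  ring

lemma myE_ne_zero {R δ l : ℤ} : myE R δ l ≠ 0 := Complex.exp_ne_zero _

lemma myE_zero {R δ : ℤ} : myE R δ 0 = 1 := by
  rw [myE]; push_cast; simp

/-- backward: the row sum vanishes given `Pd`. -/
lemma row_sum_zero {R u v w δ : ℤ} (hR : 1 ≤ R) (hP : Pd R u v w δ) :
    1 + myE R δ u + myE R δ v + myE R δ w = 0 := by
  rcases hP with ⟨h1, h2⟩ | ⟨h1, h2⟩ | ⟨h1, h2⟩
  · rw [← myE_eq_neg_one_iff hR] at h1 h2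
    have hv : myE R δ v = myE R δ (v - w) * myE R δ w := by
      rw [← myE_add]; ring_nf
    rw [hv, h1, h2]; ring
  · rw [← myE_eq_neg_one_iff hR] at h1 h2
    have hu : myE R δ u = myE R δ (u - w) * myE R δ w := by
      rw [← myE_add]; ring_nf
    rw [hu, h1, h2]; ring
  · rw [← myE_eq_neg_one_iff hR] at h1 h2
    have hu : myE R δ u = myE R δ (u - v) * myE R δ v := by
      rw [← myE_add]; ring_nf
    rw [hu, h1, h2]; ring

lemma myE_neg_left {R δ l : ℤ} : myE R (-δ) l = (myE R δ l)⁻¹ := by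
  rw [myE, myE, ← Complex.exp_neg]
  congr 1
  push_cast
  ring

/-- forward: the row conditions give `Pd`. -/
lemma Pd_of_row {R u v w δ : ℤ} (hR : 1 ≤ R)
    (h : 1 + myE R δ u + myE R δ v + myE R δ w = 0)
    (h' : 1 + myE R (-δ) u + myE R (-δ) v + myE R (-δ) w = 0) : Pd R u v w δ := by
  set zu := myE R δ u with hzu
  set zv := myE R δ v with hzv
  set zw := myE R δ w with hzw
  have hu0 : zu ≠ 0 := myE_ne_zero
  have hv0 : zv ≠ 0 := myE_ne_zero
  have hw0 : zw ≠ 0 := myE_ne_zero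
  rw [myE_neg_left, myE_neg_left, myE_neg_left, ← hzu, ← hzv, ← hzw] at h'
  have h2 : zu * zv * zw + zv * zw + zu * zw + zu * zv = 0 := by
    field_simp at h'
    linear_combination h'
  have hfac : (1 + zu) * (1 + zv) * (1 + zw) = 0 := by linear_combination h + h2
  have pairQ : ∀ x y : ℤ, myE R δ x + myE R δ y = 0 → Qd R δ (x - y) := by
    intro x y hxy
    have : myE R δ (x - y) = -1 := by
      have hy0 : myE R δ y ≠ 0 := myE_ne_zero
      have hx : myE R δ x = myE R δ (x - y) * myE R δ y := by rw [← myE_add]; ring_nf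
      rw [hx] at hxy
      have hfac2 : (myE R δ (x - y) + 1) * myE R δ y = 0 := by linear_combination hxy
      rcases mul_eq_zero.mp hfac2 with h5 | h5
      · linear_combination h5
      · exact absurd h5 hy0
    exact (myE_eq_neg_one_iff hR).mp this
  rcases mul_eq_zero.mp hfac with h3 | h3
  · rcases mul_eq_zero.mp h3 with h4 | h4
    · left
      refine ⟨(myE_eq_neg_one_iff hR).mp (by linear_combination h4), pairQ v w ?_⟩
      linear_combination h - h4
    · right; left
      refine ⟨(myE_eq_neg_one_iff hR).mp (by linear_combination h4), pairQ u w ?_⟩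
      linear_combination h - h4
  · right; right
    refine ⟨(myE_eq_neg_one_iff hR).mp (by linear_combination h3), pairQ u v ?_⟩
    linear_combination h - h3

lemma even_pow_mul {a : ℕ} (ha : 1 ≤ a) (t : ℤ) : Even (2 ^ a * t) :=
  ⟨2 ^ (a - 1) * t, by rw [show (2:ℤ) ^ a = 2 * 2 ^ (a - 1) by rw [← pow_succ']; congr 1; omega]; ring⟩

lemma arith_final (ρ : ℕ) (D : ℤ) (hD : Odd D)
    (α β γ u v w : ℤ) (hβγ : β ≠ γ)
    (M r C x : ℕ) (u' v' w' E α' β' γ' : ℤ)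
    (hu' : Odd u') (hv' : Odd v') (hw' : Odd w') (hE : Odd E)
    (hα' : Odd α') (hβ' : Odd β') (hγ' : Odd γ')
    (hu : u = 2 ^ M * u') (hv : v = 2 ^ M * v') (hw : w = 2 ^ r * w')
    (huvE : u - v = 2 ^ r * E)
    (hα : α = 2 ^ x * α') (hβ : β = 2 ^ C * β') (hγ : γ = 2 ^ C * γ')
    (hMr : M < r) (hxeq : x + M + 1 = ρ) (hCeq : C + r + 1 = ρ)
    (h1 : Pd (2 ^ ρ * D) u v w α) (h2 : Pd (2 ^ ρ * D) u v w β)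
    (h3 : Pd (2 ^ ρ * D) u v w γ) (h4 : Pd (2 ^ ρ * D) u v w (α - β))
    (h6 : Pd (2 ^ ρ * D) u v w (β - γ)) :
    ∃ (a : ℕ) (c₁ c₂ c₃ n₁ n₂ n₃ : ℤ),
      1 ≤ a ∧ Odd c₁ ∧ Odd c₂ ∧ Odd c₃ ∧ Odd n₁ ∧ Odd n₂ ∧ Odd n₃ ∧
      ρ = C + M + a + 1 ∧
      ({0, α, β, γ} : Finset ℤ) =
        ({0, 2 ^ a * c₁, c₂, c₂ + 2 ^ a * c₃} : Finset ℤ).image (fun t => 2 ^ C * t) ∧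
      ({0, u, v, w} : Finset ℤ) =
        ({0, n₁, n₁ + 2 ^ a * n₂, 2 ^ a * n₃} : Finset ℤ).image (fun t => 2 ^ M * t) ∧
      (D ∣ c₁ * n₁ ∧ D ∣ c₁ * n₂ ∧ D ∣ c₁ * n₃) ∧
      (D ∣ c₃ * n₁ ∧ D ∣ c₃ * n₂ ∧ D ∣ c₃ * n₃) ∧
      (D ∣ c₂ * n₂ ∧ D ∣ c₂ * n₃) := by
  set a := r - M with hadef
  have har : r = M + a := by omega
  have ha1 : 1 ≤ a := by omega
  have hx : x = C + a := by omega
  have hv'e : v' = u' - 2 ^ a * E := by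
    have h0 : (2:ℤ) ^ M * (u' - v') = 2 ^ M * (2 ^ a * E) := by
      rw [mul_sub, ← hu, ← hv, huvE, har, pow_add]; ring
    have := mul_left_cancel₀ (show (2:ℤ) ^ M ≠ 0 by positivity) h0
    linarith
  -- low-valuation rows use the third partition
  have low : ∀ m : ℤ, Odd m → Pd (2 ^ ρ * D) u v w (2 ^ C * m) → D ∣ m * w' ∧ D ∣ m * E := by
    intro m hm hp
    rcases hp with ⟨ha1', _⟩ | ⟨ha1', _⟩ | ⟨ha1', hb1'⟩
    · rw [hu] at ha1'
      have := ((Qd_iff hD hm hu').mp ha1').1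
      exfalso; omega
    · rw [hv] at ha1'
      have := ((Qd_iff hD hm hv').mp ha1').1
      exfalso; omega
    · rw [hw] at ha1'
      rw [huvE] at hb1'
      exact ⟨((Qd_iff hD hm hw').mp ha1').2, ((Qd_iff hD hm hE).mp hb1').2⟩
  -- high-valuation rows use the first or second partition
  have high : ∀ m : ℤ, Odd m → Pd (2 ^ ρ * D) u v w (2 ^ x * m) → D ∣ m * u' ∨ D ∣ m * v' := by
    intro m hm hp
    rcases hp with ⟨ha1', _⟩ | ⟨ha1', _⟩ | ⟨ha1', _⟩
    · rw [hu] at ha1'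
      exact Or.inl ((Qd_iff hD hm hu').mp ha1').2
    · rw [hv] at ha1'
      exact Or.inr ((Qd_iff hD hm hv').mp ha1').2
    · rw [hw] at ha1'
      have := ((Qd_iff hD hm hw').mp ha1').1
      exfalso; omega
  obtain ⟨d1, d2⟩ := low β' hβ' (by rw [← hβ]; exact h2)
  obtain ⟨d3, d4⟩ := low γ' hγ' (by rw [← hγ]; exact h3)
  have hαβe : α - β = 2 ^ C * (2 ^ a * α' - β') := by rw [hα, hβ, hx, pow_add]; ring
  have hm₁ : Odd (2 ^ a * α' - β') := (even_pow_mul ha1 α').sub_odd hβ'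
  obtain ⟨d5, d6⟩ := low _ hm₁ (by rw [← hαβe]; exact h4)
  -- decompose β - γ
  have hβγ0 : β - γ ≠ 0 := sub_ne_zero.mpr hβγ
  obtain ⟨s, K, hK, hsK⟩ := exists_odd_decomp _ hβγ0
  have hslb : C + 1 ≤ s := by
    obtain ⟨c, hc⟩ := hβ'.sub_odd hγ'
    refine le_of_pow_dvd_odd (j := C + 1) (e := s) (f := K) ?_ hK
    rw [← hsK]
    exact ⟨c, by rw [hβ, hγ, pow_succ]; linear_combination (2:ℤ) ^ C * hc⟩
  have h6' : Pd (2 ^ ρ * D) u v w (2 ^ s * K) := by rw [← hsK]; exact h6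
  have hs_eq : s = x ∧ (D ∣ K * u' ∨ D ∣ K * v') := by
    rcases h6' with ⟨ha1', _⟩ | ⟨ha1', _⟩ | ⟨ha1', _⟩
    · rw [hu] at ha1'
      have hq := (Qd_iff hD hK hu').mp ha1'
      exact ⟨by omega, Or.inl hq.2⟩
    · rw [hv] at ha1'
      have hq := (Qd_iff hD hK hv').mp ha1'
      exact ⟨by omega, Or.inr hq.2⟩
    · rw [hw] at ha1'
      have := ((Qd_iff hD hK hw').mp ha1').1
      exfalso; omega
  obtain ⟨hsx, hKdvd⟩ := hs_eq
  have hγ'e : γ' = β' - 2 ^ a * K := by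
    have h0 : (2:ℤ) ^ C * (β' - γ') = 2 ^ C * (2 ^ a * K) := by
      rw [mul_sub, ← hβ, ← hγ, hsK, hsx, hx, pow_add]; ring
    have := mul_left_cancel₀ (show (2:ℤ) ^ C ≠ 0 by positivity) h0
    linarith
  have hα1 := high α' hα' (by rw [← hα]; exact h1)
  -- combined divisibilities
  have hα'E : D ∣ α' * E := by
    refine odd_dvd_of_dvd_pow_mul hD (a := a) ?_
    have hh := dvd_add d6 d2
    rwa [show (2 ^ a * α' - β') * E + β' * E = 2 ^ a * (α' * E) by ring] at hh
  have hα'w' : D ∣ α' * w' := by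
    refine odd_dvd_of_dvd_pow_mul hD (a := a) ?_
    have hh := dvd_add d5 d1
    rwa [show (2 ^ a * α' - β') * w' + β' * w' = 2 ^ a * (α' * w') by ring] at hh
  have hKE : D ∣ K * E := by
    refine odd_dvd_of_dvd_pow_mul hD (a := a) ?_
    have hh := dvd_sub d2 d4
    rwa [show β' * E - γ' * E = 2 ^ a * (K * E) by rw [hγ'e]; ring] at hh
  have hKw' : D ∣ K * w' := by
    refine odd_dvd_of_dvd_pow_mul hD (a := a) ?_
    have hh := dvd_sub d1 d3
    rwa [show β' * w' - γ' * w' = 2 ^ a * (K * w') by rw [hγ'e]; ring] at hh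
  have hα'u' : D ∣ α' * u' := by
    rcases hα1 with hh | hh
    · exact hh
    · have : α' * u' = α' * v' + 2 ^ a * (α' * E) := by rw [hv'e]; ring
      rw [this]
      exact dvd_add hh (hα'E.mul_left _)
  have hKu' : D ∣ K * u' := by
    rcases hKdvd with hh | hh
    · exact hh
    · have : K * u' = K * v' + 2 ^ a * (K * E) := by rw [hv'e]; ring
      rw [this]
      exact dvd_add hh (hKE.mul_left _)
  refine ⟨a, α', β', -K, u', -E, w', ha1, hα', hβ', hK.neg, hu', hE.neg, hw', by omega, ?_, ?_,
    ⟨hα'u', by rw [mul_neg]; exact dvd_neg.mpr hα'E, hα'w'⟩,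
    ⟨by rw [neg_mul]; exact dvd_neg.mpr hKu', by rw [neg_mul_neg]; exact hKE,
      by rw [neg_mul]; exact dvd_neg.mpr hKw'⟩,
    ⟨by rw [mul_neg]; exact dvd_neg.mpr d2, d1⟩⟩
  · have e1 : α = 2 ^ C * (2 ^ a * α') := by rw [hα, hx, pow_add]; ring
    have e3 : γ = 2 ^ C * (β' + 2 ^ a * -K) := by rw [hγ, hγ'e]; ring
    simp only [Finset.image_insert, Finset.image_singleton, mul_zero]
    rw [← e1, ← hβ, ← e3]
  · have e5 : v = 2 ^ M * (u' + 2 ^ a * -E) := by rw [hv, hv'e]; ring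
    have e6 : w = 2 ^ M * (2 ^ a * w') := by rw [hw, har, pow_add]; ring
    simp only [Finset.image_insert, Finset.image_singleton, mul_zero]
    rw [← hu, ← e5, ← e6]

lemma quad_comm12 (d a b c : ℤ) : ({d, a, b, c} : Finset ℤ) = {d, b, a, c} := by
  ext t; simp only [Finset.mem_insert, Finset.mem_singleton]; tauto

lemma quad_comm_rot (d a b c : ℤ) : ({d, a, b, c} : Finset ℤ) = {d, c, a, b} := by
  ext t; simp only [Finset.mem_insert, Finset.mem_singleton]; tauto

lemma diff_lev_gt {s f : ℕ} {p q F : ℤ} (hp : Odd p) (hq : Odd q) (hF : Odd F)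
    (h : 2 ^ s * p - 2 ^ s * q = 2 ^ f * F) : s < f := by
  obtain ⟨c, hc⟩ := hp.sub_odd hq
  have hdvd : (2:ℤ) ^ (s + 1) ∣ 2 ^ f * F :=
    ⟨c, by rw [← h, pow_succ]; linear_combination (2:ℤ) ^ s * hc⟩
  have := le_of_pow_dvd_odd hdvd hF
  omega

lemma arith_sorted_L (ρ : ℕ) (D : ℤ) (hD : Odd D)
    (α β γ u v w : ℤ)
    (hαβ : α ≠ β) (hαγ : α ≠ γ) (hβγ : β ≠ γ)
    (hα0 : α ≠ 0) (hβ0 : β ≠ 0) (hγ0 : γ ≠ 0) (huv : u ≠ v)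
    (M r : ℕ) (u' v' w' : ℤ) (hu' : Odd u') (hv' : Odd v') (hw' : Odd w')
    (hu : u = 2 ^ M * u') (hv : v = 2 ^ M * v') (hw : w = 2 ^ r * w') (hMr : M < r)
    (h1 : Pd (2 ^ ρ * D) u v w α) (h2 : Pd (2 ^ ρ * D) u v w β)
    (h3 : Pd (2 ^ ρ * D) u v w γ) (h4 : Pd (2 ^ ρ * D) u v w (α - β))
    (h5 : Pd (2 ^ ρ * D) u v w (α - γ)) (h6 : Pd (2 ^ ρ * D) u v w (β - γ)) :
    ∃ (C : ℕ) (a : ℕ) (c₁ c₂ c₃ n₁ n₂ n₃ : ℤ),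
      1 ≤ a ∧ Odd c₁ ∧ Odd c₂ ∧ Odd c₃ ∧ Odd n₁ ∧ Odd n₂ ∧ Odd n₃ ∧
      ρ = C + M + a + 1 ∧
      ({0, α, β, γ} : Finset ℤ) =
        ({0, 2 ^ a * c₁, c₂, c₂ + 2 ^ a * c₃} : Finset ℤ).image (fun t => 2 ^ C * t) ∧
      ({0, u, v, w} : Finset ℤ) =
        ({0, n₁, n₁ + 2 ^ a * n₂, 2 ^ a * n₃} : Finset ℤ).image (fun t => 2 ^ M * t) ∧
      (D ∣ c₁ * n₁ ∧ D ∣ c₁ * n₂ ∧ D ∣ c₁ * n₃) ∧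
      (D ∣ c₃ * n₁ ∧ D ∣ c₃ * n₂ ∧ D ∣ c₃ * n₃) ∧
      (D ∣ c₂ * n₂ ∧ D ∣ c₂ * n₃) := by
  obtain ⟨x, α', hα', hαd⟩ := exists_odd_decomp α hα0
  obtain ⟨y, β', hβ', hβd⟩ := exists_odd_decomp β hβ0
  obtain ⟨z, γ', hγ', hγd⟩ := exists_odd_decomp γ hγ0
  obtain ⟨f₁, F₁, hF₁, h4d⟩ := exists_odd_decomp (α - β) (sub_ne_zero.mpr hαβ)
  obtain ⟨f₂, F₂, hF₂, h5d⟩ := exists_odd_decomp (α - γ) (sub_ne_zero.mpr hαγ)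
  obtain ⟨f₃, F₃, hF₃, h6d⟩ := exists_odd_decomp (β - γ) (sub_ne_zero.mpr hβγ)
  obtain ⟨ε₀, E, hE, huvd⟩ := exists_odd_decomp (u - v) (sub_ne_zero.mpr huv)
  have typ : ∀ (s : ℕ) (m : ℤ), Odd m → Pd (2 ^ ρ * D) u v w (2 ^ s * m) →
      (s + M + 1 = ρ) ∨ (ε₀ = r ∧ s + r + 1 = ρ) := by
    intro s m hm hp
    rcases hp with ⟨ha1', _⟩ | ⟨ha1', _⟩ | ⟨ha1', hb1'⟩
    · rw [hu] at ha1'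
      exact Or.inl ((Qd_iff hD hm hu').mp ha1').1
    · rw [hv] at ha1'
      exact Or.inl ((Qd_iff hD hm hv').mp ha1').1
    · rw [hw] at ha1'
      rw [huvd] at hb1'
      have e1 := ((Qd_iff hD hm hw').mp ha1').1
      have e2 := ((Qd_iff hD hm hE).mp hb1').1
      exact Or.inr ⟨by omega, e1⟩
  have t1 := typ x α' hα' (by rw [← hαd]; exact h1)
  have t2 := typ y β' hβ' (by rw [← hβd]; exact h2)
  have t3 := typ z γ' hγ' (by rw [← hγd]; exact h3)
  have t4 := typ f₁ F₁ hF₁ (by rw [← h4d]; exact h4)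
  have t5 := typ f₂ F₂ hF₂ (by rw [← h5d]; exact h5)
  have t6 := typ f₃ F₃ hF₃ (by rw [← h6d]; exact h6)
  by_cases hre : ε₀ = r
  case neg =>
    exfalso
    have hx1 : x + M + 1 = ρ := by rcases t1 with h | h; exacts [h, absurd h.1 hre]
    have hy1 : y + M + 1 = ρ := by rcases t2 with h | h; exacts [h, absurd h.1 hre]
    have hf1 : f₁ + M + 1 = ρ := by rcases t4 with h | h; exacts [h, absurd h.1 hre]
    have hxy : x = y := by omega
    have hβd' : β = 2 ^ x * β' := by rw [hβd, hxy]
    have := diff_lev_gt hα' hβ' hF₁ (by rw [← hαd, ← hβd']; exact h4d)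
    omega
  case pos =>
    rw [hre] at huvd
    have t1' : x + M + 1 = ρ ∨ x + r + 1 = ρ := by rcases t1 with h | h; exacts [Or.inl h, Or.inr h.2]
    have t2' : y + M + 1 = ρ ∨ y + r + 1 = ρ := by rcases t2 with h | h; exacts [Or.inl h, Or.inr h.2]
    have t3' : z + M + 1 = ρ ∨ z + r + 1 = ρ := by rcases t3 with h | h; exacts [Or.inl h, Or.inr h.2]
    have t4' : f₁ + M + 1 = ρ ∨ f₁ + r + 1 = ρ := by rcases t4 with h | h; exacts [Or.inl h, Or.inr h.2]
    have t5' : f₂ + M + 1 = ρ ∨ f₂ + r + 1 = ρ := by rcases t5 with h | h; exacts [Or.inl h, Or.inr h.2]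
    have t6' : f₃ + M + 1 = ρ ∨ f₃ + r + 1 = ρ := by rcases t6 with h | h; exacts [Or.inl h, Or.inr h.2]
    rcases t1' with hx1 | hx2 <;> rcases t2' with hy1 | hy2 <;> rcases t3' with hz1 | hz2
    -- case (1,1,1)
    · exfalso
      have hxy : x = y := by omega
      have hβd' : β = 2 ^ x * β' := by rw [hβd, hxy]
      have := diff_lev_gt hα' hβ' hF₁ (by rw [← hαd, ← hβd']; exact h4d)
      omega
    -- case (1,1,2)
    · exfalso
      have hxy : x = y := by omega
      have hβd' : β = 2 ^ x * β' := by rw [hβd, hxy]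
      have := diff_lev_gt hα' hβ' hF₁ (by rw [← hαd, ← hβd']; exact h4d)
      omega
    -- case (1,2,1)
    · exfalso
      have hxz : x = z := by omega
      have hγd' : γ = 2 ^ x * γ' := by rw [hγd, hxz]
      have := diff_lev_gt hα' hγ' hF₂ (by rw [← hαd, ← hγd']; exact h5d)
      omega
    -- case (1,2,2): good, α is high
    · have hzy : z = y := by omega
      have hγd' : γ = 2 ^ y * γ' := by rw [hγd, hzy]
      obtain ⟨a, c₁, c₂, c₃, n₁, n₂, n₃, hh⟩ :=
        arith_final ρ D hD α β γ u v w hβγ M r y x u' v' w' E α' β' γ' hu' hv' hw' hE hα' hβ' hγ'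
          hu hv hw huvd hαd hβd hγd' hMr hx1 hy2 h1 h2 h3 h4 h6
      exact ⟨y, a, c₁, c₂, c₃, n₁, n₂, n₃, hh⟩
    -- case (2,1,1)
    · exfalso
      have hyz : y = z := by omega
      have hγd' : γ = 2 ^ y * γ' := by rw [hγd, hyz]
      have := diff_lev_gt hβ' hγ' hF₃ (by rw [← hβd, ← hγd']; exact h6d)
      omega
    -- case (2,1,2): good, β is high
    · have hzx : z = x := by omega
      have hγd' : γ = 2 ^ x * γ' := by rw [hγd, hzx]
      obtain ⟨a, c₁, c₂, c₃, n₁, n₂, n₃, ha, hc1, hc2, hc3, hn1, hn2, hn3, hρ, hA, hL, hdv⟩ :=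
        arith_final ρ D hD β α γ u v w hαγ M r x y u' v' w' E β' α' γ' hu' hv' hw' hE hβ' hα' hγ'
          hu hv hw huvd hβd hαd hγd' hMr hy1 hx2 h2 h1 h3 (Pd_congr (by ring) h4) h5
      have hset : ({0, α, β, γ} : Finset ℤ) = ({0, β, α, γ} : Finset ℤ) := by
        exact quad_comm12 0 α β γ
      exact ⟨x, a, c₁, c₂, c₃, n₁, n₂, n₃, ha, hc1, hc2, hc3, hn1, hn2, hn3, hρ,
        by rw [hset]; exact hA, hL, hdv⟩
    -- case (2,2,1): good, γ is high
    · have hyx : y = x := by omega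
      have hβd' : β = 2 ^ x * β' := by rw [hβd, hyx]
      obtain ⟨a, c₁, c₂, c₃, n₁, n₂, n₃, ha, hc1, hc2, hc3, hn1, hn2, hn3, hρ, hA, hL, hdv⟩ :=
        arith_final ρ D hD γ α β u v w hαβ M r x z u' v' w' E γ' α' β' hu' hv' hw' hE hγ' hα' hβ'
          hu hv hw huvd hγd hαd hβd' hMr hz1 hx2 h3 h1 h2 (Pd_congr (by ring) h5) h4
      have hset : ({0, α, β, γ} : Finset ℤ) = ({0, γ, α, β} : Finset ℤ) := by
        exact quad_comm_rot 0 α β γ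
      exact ⟨x, a, c₁, c₂, c₃, n₁, n₂, n₃, ha, hc1, hc2, hc3, hn1, hn2, hn3, hρ,
        by rw [hset]; exact hA, hL, hdv⟩
    -- case (2,2,2)
    · exfalso
      have hxy : x = y := by omega
      have hβd' : β = 2 ^ x * β' := by rw [hβd, hxy]
      have hxz : x = z := by omega
      have hγd' : γ = 2 ^ x * γ' := by rw [hγd, hxz]
      have hf1 := diff_lev_gt hα' hβ' hF₁ (by rw [← hαd, ← hβd']; exact h4d)
      have hf2 := diff_lev_gt hα' hγ' hF₂ (by rw [← hαd, ← hγd']; exact h5d)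
      have hf3 := diff_lev_gt hβ' hγ' hF₃ (by rw [← hβd', ← hγd']; exact h6d)
      have hf1e : f₁ + M + 1 = ρ := by rcases t4' with h | h; exacts [h, by omega]
      have hf2e : f₂ = f₁ := by rcases t5' with h | h <;> omega
      have hf3e : f₃ = f₁ := by rcases t6' with h | h <;> omega
      have h5d' : α - γ = 2 ^ f₁ * F₂ := by rw [h5d, hf2e]
      have h6d' : β - γ = 2 ^ f₁ * F₃ := by rw [h6d, hf3e]
      have he : (2:ℤ) ^ f₁ * F₁ = 2 ^ f₁ * (F₂ - F₃) := by
        rw [← h4d, mul_sub, ← h5d', ← h6d']; ring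
      have hFe := mul_left_cancel₀ (show (2:ℤ) ^ f₁ ≠ 0 by positivity) he
      have : Even F₁ := hFe ▸ hF₂.sub_odd hF₃
      exact (Int.not_even_iff_odd.mpr hF₁) this

lemma lev_sub_of_lt {s t f : ℕ} {P Q F : ℤ} (hP : Odd P) (hQ : Odd Q) (hF : Odd F)
    (hst : s < t) (h : 2 ^ s * P - 2 ^ t * Q = 2 ^ f * F) : f = s := by
  have hsplit : (2:ℤ) ^ t = 2 ^ s * 2 ^ (t - s) := by rw [← pow_add]; congr 1; omega
  have he : (2:ℤ) ^ s * (P - 2 ^ (t - s) * Q) = 2 ^ f * F := by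
    rw [← h, hsplit]; ring
  exact ((odd_decomp_uniq he (hP.sub_even (even_pow_mul (by omega) Q)) hF).1).symm

lemma lev_sub_gt {s t f : ℕ} {P Q F : ℤ} (hP : Odd P) (hQ : Odd Q) (hF : Odd F)
    (hst : t < s) (h : 2 ^ s * P - 2 ^ t * Q = 2 ^ f * F) : f = t := by
  exact lev_sub_of_lt hQ hP hF.neg hst (by linear_combination -h)

lemma quad_comm23 (d a b c : ℤ) : ({d, a, b, c} : Finset ℤ) = {d, a, c, b} := by
  ext t; simp only [Finset.mem_insert, Finset.mem_singleton]; tauto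

lemma quad_rot (d a b c : ℤ) : ({d, a, b, c} : Finset ℤ) = {d, b, c, a} := by
  ext t; simp only [Finset.mem_insert, Finset.mem_singleton]; tauto

lemma arith_main (ρ : ℕ) (D : ℤ) (hD : Odd D)
    (α β γ u v w : ℤ)
    (hαβ : α ≠ β) (hαγ : α ≠ γ) (hβγ : β ≠ γ)
    (hα0 : α ≠ 0) (hβ0 : β ≠ 0) (hγ0 : γ ≠ 0)
    (huv : u ≠ v) (huw : u ≠ w) (hvw : v ≠ w)
    (hu0 : u ≠ 0) (hv0 : v ≠ 0) (hw0 : w ≠ 0)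
    (h1 : Pd (2 ^ ρ * D) u v w α) (h2 : Pd (2 ^ ρ * D) u v w β)
    (h3 : Pd (2 ^ ρ * D) u v w γ) (h4 : Pd (2 ^ ρ * D) u v w (α - β))
    (h5 : Pd (2 ^ ρ * D) u v w (α - γ)) (h6 : Pd (2 ^ ρ * D) u v w (β - γ)) :
    ∃ (C M : ℕ) (a : ℕ) (c₁ c₂ c₃ n₁ n₂ n₃ : ℤ),
      1 ≤ a ∧ Odd c₁ ∧ Odd c₂ ∧ Odd c₃ ∧ Odd n₁ ∧ Odd n₂ ∧ Odd n₃ ∧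
      ρ = C + M + a + 1 ∧
      ({0, α, β, γ} : Finset ℤ) =
        ({0, 2 ^ a * c₁, c₂, c₂ + 2 ^ a * c₃} : Finset ℤ).image (fun t => 2 ^ C * t) ∧
      ({0, u, v, w} : Finset ℤ) =
        ({0, n₁, n₁ + 2 ^ a * n₂, 2 ^ a * n₃} : Finset ℤ).image (fun t => 2 ^ M * t) ∧
      (D ∣ c₁ * n₁ ∧ D ∣ c₁ * n₂ ∧ D ∣ c₁ * n₃) ∧
      (D ∣ c₃ * n₁ ∧ D ∣ c₃ * n₂ ∧ D ∣ c₃ * n₃) ∧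
      (D ∣ c₂ * n₂ ∧ D ∣ c₂ * n₃) := by
  obtain ⟨p, u', hu', hud⟩ := exists_odd_decomp u hu0
  obtain ⟨q, v', hv', hvd⟩ := exists_odd_decomp v hv0
  obtain ⟨r0, w', hw', hwd⟩ := exists_odd_decomp w hw0
  obtain ⟨euv, Fuv, hFuv, huvd⟩ := exists_odd_decomp (u - v) (sub_ne_zero.mpr huv)
  obtain ⟨euw, Fuw, hFuw, huwd⟩ := exists_odd_decomp (u - w) (sub_ne_zero.mpr huw)
  obtain ⟨evw, Fvw, hFvw, hvwd⟩ := exists_odd_decomp (v - w) (sub_ne_zero.mpr hvw)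
  obtain ⟨x, α', hα', hαd⟩ := exists_odd_decomp α hα0
  have h1' : Pd (2 ^ ρ * D) u v w (2 ^ x * α') := by rw [← hαd]; exact h1
  have hbal : p = evw ∨ q = euw ∨ r0 = euv := by
    rcases h1' with ⟨ha1', hb1'⟩ | ⟨ha1', hb1'⟩ | ⟨ha1', hb1'⟩
    · rw [hud] at ha1'; rw [hvwd] at hb1'
      have e1 := ((Qd_iff hD hα' hu').mp ha1').1
      have e2 := ((Qd_iff hD hα' hFvw).mp hb1').1
      exact Or.inl (by omega)
    · rw [hvd] at ha1'; rw [huwd] at hb1'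
      have e1 := ((Qd_iff hD hα' hv').mp ha1').1
      have e2 := ((Qd_iff hD hα' hFuw).mp hb1').1
      exact Or.inr (Or.inl (by omega))
    · rw [hwd] at ha1'; rw [huvd] at hb1'
      have e1 := ((Qd_iff hD hα' hw').mp ha1').1
      have e2 := ((Qd_iff hD hα' hFuv).mp hb1').1
      exact Or.inr (Or.inr (by omega))
  -- level facts for the difference of two L-elements
  have levuv : (p < q → euv = p) ∧ (p = q → p < euv) ∧ (q < p → euv = q) :=
    ⟨fun h' => lev_sub_of_lt hu' hv' hFuv h' (by rw [← hud, ← hvd]; exact huvd),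
     fun h' => by
       have hvd' : v = 2 ^ p * v' := by rw [hvd, h']
       exact diff_lev_gt hu' hv' hFuv (by rw [← hud, ← hvd']; exact huvd),
     fun h' => lev_sub_gt hu' hv' hFuv h' (by rw [← hud, ← hvd]; exact huvd)⟩
  have levuw : (p < r0 → euw = p) ∧ (p = r0 → p < euw) ∧ (r0 < p → euw = r0) :=
    ⟨fun h' => lev_sub_of_lt hu' hw' hFuw h' (by rw [← hud, ← hwd]; exact huwd),
     fun h' => by
       have hwd' : w = 2 ^ p * w' := by rw [hwd, h']
       exact diff_lev_gt hu' hw' hFuw (by rw [← hud, ← hwd']; exact huwd),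
     fun h' => lev_sub_gt hu' hw' hFuw h' (by rw [← hud, ← hwd]; exact huwd)⟩
  have levvw : (q < r0 → evw = q) ∧ (q = r0 → q < evw) ∧ (r0 < q → evw = r0) :=
    ⟨fun h' => lev_sub_of_lt hv' hw' hFvw h' (by rw [← hvd, ← hwd]; exact hvwd),
     fun h' => by
       have hwd' : w = 2 ^ q * w' := by rw [hwd, h']
       exact diff_lev_gt hv' hw' hFvw (by rw [← hvd, ← hwd']; exact hvwd),
     fun h' => lev_sub_gt hv' hw' hFvw h' (by rw [← hvd, ← hwd]; exact hvwd)⟩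
  -- the three good configurations
  have good1 : p = q → p < r0 → _ := fun hpq hpr => by
    have hvd' : v = 2 ^ p * v' := by rw [hvd, hpq]
    exact arith_sorted_L ρ D hD α β γ u v w hαβ hαγ hβγ hα0 hβ0 hγ0 huv p r0 u' v' w'
      hu' hv' hw' hud hvd' hwd hpr h1 h2 h3 h4 h5 h6
  have good2 : p = r0 → p < q → _ := fun hpr hpq => by
    have hwd' : w = 2 ^ p * w' := by rw [hwd, hpr]
    exact arith_sorted_L ρ D hD α β γ u w v hαβ hαγ hβγ hα0 hβ0 hγ0 huw p q u' w' v'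
      hu' hw' hv' hud hwd' hvd hpq (Pd_swap23 h1) (Pd_swap23 h2) (Pd_swap23 h3)
      (Pd_swap23 h4) (Pd_swap23 h5) (Pd_swap23 h6)
  have good3 : q = r0 → q < p → _ := fun hqr hqp => by
    have hwd' : w = 2 ^ q * w' := by rw [hwd, hqr]
    exact arith_sorted_L ρ D hD α β γ v w u hαβ hαγ hβγ hα0 hβ0 hγ0 hvw q p v' w' u'
      hv' hw' hu' hvd hwd' hud hqp (Pd_swap23 (Pd_swap12 h1)) (Pd_swap23 (Pd_swap12 h2))
      (Pd_swap23 (Pd_swap12 h3)) (Pd_swap23 (Pd_swap12 h4)) (Pd_swap23 (Pd_swap12 h5))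
      (Pd_swap23 (Pd_swap12 h6))
  rcases lt_trichotomy p q with hpq | hpq | hpq
  · rcases lt_trichotomy p r0 with hpr | hpr | hpr
    · exfalso
      rcases hbal with hb | hb | hb
      · rcases lt_trichotomy q r0 with h' | h' | h'
        · have := levvw.1 h'; omega
        · have := levvw.2.1 h'; omega
        · have := levvw.2.2 h'; omega
      · have := levuw.1 hpr; omega
      · have := levuv.1 hpq; omega
    · obtain ⟨C, a, c₁, c₂, c₃, n₁, n₂, n₃, g1, g2, g3, g4, g5, g6, g7, g8, gA, gL, gd⟩ :=
        good2 hpr hpq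
      exact ⟨C, p, a, c₁, c₂, c₃, n₁, n₂, n₃, g1, g2, g3, g4, g5, g6, g7, g8, gA,
        by rw [quad_comm23 0 u v w]; exact gL, gd⟩
    · exfalso
      rcases hbal with hb | hb | hb
      · have := levvw.2.2 (by omega); omega
      · have := levuw.2.2 hpr; omega
      · have := levuv.1 hpq; omega
  · rcases lt_trichotomy p r0 with hpr | hpr | hpr
    · obtain ⟨C, a, c₁, c₂, c₃, n₁, n₂, n₃, g1, g2, g3, g4, g5, g6, g7, g8, gA, gL, gd⟩ :=
        good1 hpq hpr
      exact ⟨C, p, a, c₁, c₂, c₃, n₁, n₂, n₃, g1, g2, g3, g4, g5, g6, g7, g8, gA, gL, gd⟩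
    · exfalso
      rcases hbal with hb | hb | hb
      · have := levvw.2.1 (by omega); omega
      · have := levuw.2.1 hpr; omega
      · have := levuv.2.1 hpq; omega
    · exfalso
      rcases hbal with hb | hb | hb
      · have := levvw.2.2 (by omega); omega
      · have := levuw.2.2 hpr; omega
      · have := levuv.2.1 hpq; omega
  · rcases lt_trichotomy q r0 with hqr | hqr | hqr
    · exfalso
      rcases hbal with hb | hb | hb
      · have := levvw.1 hqr; omega
      · rcases lt_trichotomy p r0 with h' | h' | h'
        · have := levuw.1 h'; omega
        · have := levuw.2.1 h'; omega
        · have := levuw.2.2 h'; omega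
      · have := levuv.2.2 hpq; omega
    · obtain ⟨C, a, c₁, c₂, c₃, n₁, n₂, n₃, g1, g2, g3, g4, g5, g6, g7, g8, gA, gL, gd⟩ :=
        good3 hqr hpq
      exact ⟨C, q, a, c₁, c₂, c₃, n₁, n₂, n₃, g1, g2, g3, g4, g5, g6, g7, g8, gA,
        by rw [quad_rot 0 u v w]; exact gL, gd⟩
    · exfalso
      rcases hbal with hb | hb | hb
      · have := levvw.2.2 hqr; omega
      · have := levuw.2.2 (by omega); omega
      · have := levuv.2.2 hpq; omega


lemma odd_ne_zero {x : ℤ} (h : Odd x) : x ≠ 0 := by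
  rintro rfl
  rw [Int.odd_iff] at h
  norm_num at h

lemma odd_of_dvd_odd {d x : ℤ} (hdx : d ∣ x) (hx : Odd x) : Odd d := by
  rcases Int.even_or_odd d with he | ho
  · exfalso
    obtain ⟨t, ht⟩ := he
    obtain ⟨k, hk⟩ := hdx
    rw [Int.not_even_iff_odd.symm] at hx
    exact hx ⟨t * k, by rw [hk, ht]; ring⟩
  · exact ho

lemma dvd_mul_gcd3 {D x n₁ n₂ n₃ : ℤ} (h1 : D ∣ x * n₁) (h2 : D ∣ x * n₂) (h3 : D ∣ x * n₃) :
    D ∣ x * (Int.gcd n₁ (Int.gcd n₂ n₃) : ℤ) := by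
  have h23 : D ∣ x * (Int.gcd n₂ n₃ : ℤ) := by
    have e1 : x * ((Int.gcd n₂ n₃ : ℤ)) = (x * n₂) * Int.gcdA n₂ n₃ + (x * n₃) * Int.gcdB n₂ n₃ := by
      rw [Int.gcd_eq_gcd_ab n₂ n₃]; ring
    rw [e1]
    exact dvd_add (h2.mul_right _) (h3.mul_right _)
  have e2 : x * ((Int.gcd n₁ (Int.gcd n₂ n₃ : ℤ) : ℤ)) =
      (x * n₁) * Int.gcdA n₁ (Int.gcd n₂ n₃ : ℤ) +
      (x * (Int.gcd n₂ n₃ : ℤ)) * Int.gcdB n₁ (Int.gcd n₂ n₃ : ℤ) := by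
    rw [Int.gcd_eq_gcd_ab n₁ ((Int.gcd n₂ n₃ : ℤ))]; ring
  rw [e2]
  exact dvd_add (h1.mul_right _) (h23.mul_right _)

lemma sum_four (f : ℤ → ℂ) (u v w : ℤ) (hu0 : u ≠ 0) (hv0 : v ≠ 0) (hw0 : w ≠ 0)
    (huv : u ≠ v) (huw : u ≠ w) (hvw : v ≠ w) :
    ∑ l ∈ ({0, u, v, w} : Finset ℤ), f l = f 0 + f u + f v + f w := by
  rw [Finset.sum_insert (by
    simp only [Finset.mem_insert, Finset.mem_singleton]
    push_neg
    exact ⟨fun h => hu0 h.symm, fun h => hv0 h.symm, fun h => hw0 h.symm⟩)]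
  rw [Finset.sum_insert (by
    simp only [Finset.mem_insert, Finset.mem_singleton]
    push_neg
    exact ⟨huv, huw⟩)]
  rw [Finset.sum_insert (by simp only [Finset.mem_singleton]; exact hvw)]
  rw [Finset.sum_singleton]
  ring

lemma term_eq (R b b' l : ℤ) :
    Complex.exp (2 * (Real.pi : ℂ) * Complex.I * ((b : ℂ) - (b' : ℂ)) *
      ((((l : ℝ) / (R : ℝ)) : ℝ) : ℂ)) = myE R (b - b') l := by
  rw [myE]
  congr 1
  push_cast
  ring

/-- From the spectrum property, every difference row gives `Pd`. -/
lemma spectrum_rows (A L : Finset ℤ) (R : ℤ) (hR : 1 ≤ R)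
    (u v w : ℤ) (hL4 : L = {0, u, v, w})
    (hu0 : u ≠ 0) (hv0 : v ≠ 0) (hw0 : w ≠ 0) (huv : u ≠ v) (huw : u ≠ w) (hvw : v ≠ w)
    (hsum : ∀ a ∈ A, ∀ a' ∈ A,
      ∑ γ ∈ (L.image fun x : ℤ => (x : ℝ) / (R : ℝ)),
        Complex.exp (2 * Real.pi * Complex.I * (((a : ℤ) : ℂ) - ((a' : ℤ) : ℂ)) * (γ : ℂ)) =
        if a = a' then (A.card : ℂ) else 0) :
    ∀ b ∈ A, ∀ b' ∈ A, b ≠ b' → Pd R u v w (b - b') := by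
  have hR0 : (R : ℝ) ≠ 0 := by
    have : (1 : ℝ) ≤ (R : ℝ) := by exact_mod_cast hR
    linarith
  have hinj : ∀ x ∈ L, ∀ y ∈ L, (x : ℝ) / (R : ℝ) = (y : ℝ) / (R : ℝ) → x = y := by
    intro x _ y _ hxy
    field_simp at hxy
    exact_mod_cast hxy
  have key : ∀ b ∈ A, ∀ b' ∈ A, b ≠ b' →
      1 + myE R (b - b') u + myE R (b - b') v + myE R (b - b') w = 0 := by
    intro b hb b' hb' hbb
    have h0 := hsum b hb b' hb'
    rw [if_neg hbb, Finset.sum_image hinj, hL4,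
      sum_four _ u v w hu0 hv0 hw0 huv huw hvw] at h0
    simp only [term_eq] at h0
    rw [myE_zero] at h0
    exact h0
  intro b hb b' hb' hbb
  apply Pd_of_row hR (key b hb b' hb' hbb)
  have h2 := key b' hb' b hb (Ne.symm hbb)
  rw [show b' - b = -(b - b') by ring] at h2
  exact h2

lemma backward_rows (R : ℤ) (C M a : ℕ) (c₁ c₂ c₃ n₁ n₂ n₃ d : ℤ)
    (ha1 : 1 ≤ a) (hc1 : Odd c₁) (hc2 : Odd c₂) (hc3 : Odd c₃)
    (hn1 : Odd n₁) (hn2 : Odd n₂) (hn3 : Odd n₃) (hdodd : Odd d)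
    (hRe : R = 2 ^ (C + M + a + 1) * d)
    (dc1n1 : d ∣ c₁ * n₁) (dc1n2 : d ∣ c₁ * n₂) (dc1n3 : d ∣ c₁ * n₃)
    (dc3n1 : d ∣ c₃ * n₁) (dc3n2 : d ∣ c₃ * n₂) (dc3n3 : d ∣ c₃ * n₃)
    (dc2n2 : d ∣ c₂ * n₂) (dc2n3 : d ∣ c₂ * n₃) :
    ∀ b ∈ ({0, 2 ^ C * (2 ^ a * c₁), 2 ^ C * c₂, 2 ^ C * (c₂ + 2 ^ a * c₃)} : Finset ℤ),
    ∀ b' ∈ ({0, 2 ^ C * (2 ^ a * c₁), 2 ^ C * c₂, 2 ^ C * (c₂ + 2 ^ a * c₃)} : Finset ℤ),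
      b ≠ b' →
      Pd R (2 ^ M * n₁) (2 ^ M * (n₁ + 2 ^ a * n₂)) (2 ^ M * (2 ^ a * n₃)) (b - b') := by
  have hw2 : (2:ℤ) ^ M * (2 ^ a * n₃) = 2 ^ (M + a) * n₃ := by rw [pow_add]; ring
  have hvw : (2:ℤ) ^ M * (n₁ + 2 ^ a * n₂) - 2 ^ M * (2 ^ a * n₃) =
      2 ^ M * (n₁ + 2 ^ a * (n₂ - n₃)) := by ring
  have huv : (2:ℤ) ^ M * n₁ - 2 ^ M * (n₁ + 2 ^ a * n₂) = 2 ^ (M + a) * (-n₂) := by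
    rw [pow_add]; ring
  have ho_vw : Odd (n₁ + 2 ^ a * (n₂ - n₃)) := hn1.add_even (even_pow_mul ha1 _)
  have hδ1 : (2:ℤ) ^ C * (2 ^ a * c₁) = 2 ^ (C + a) * c₁ := by rw [pow_add]; ring
  have hδ6 : (2:ℤ) ^ C * c₂ - 2 ^ C * (c₂ + 2 ^ a * c₃) = 2 ^ (C + a) * (-c₃) := by
    rw [pow_add]; ring
  have hδ4 : (2:ℤ) ^ C * (2 ^ a * c₁) - 2 ^ C * c₂ = 2 ^ C * (2 ^ a * c₁ - c₂) := by ring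
  have hδ5 : (2:ℤ) ^ C * (2 ^ a * c₁) - 2 ^ C * (c₂ + 2 ^ a * c₃) =
      2 ^ C * (2 ^ a * c₁ - (c₂ + 2 ^ a * c₃)) := by ring
  have ho_γ : Odd (c₂ + 2 ^ a * c₃) := hc2.add_even (even_pow_mul ha1 _)
  have ho_δ4 : Odd (2 ^ a * c₁ - c₂) := (even_pow_mul ha1 _).sub_odd hc2
  have ho_δ5 : Odd (2 ^ a * c₁ - (c₂ + 2 ^ a * c₃)) := by
    rw [show (2:ℤ) ^ a * c₁ - (c₂ + 2 ^ a * c₃) = 2 ^ a * (c₁ - c₃) - c₂ by ring]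
    exact (even_pow_mul ha1 _).sub_odd hc2
  have P1 : Pd R (2 ^ M * n₁) (2 ^ M * (n₁ + 2 ^ a * n₂)) (2 ^ M * (2 ^ a * n₃))
      (2 ^ C * (2 ^ a * c₁)) := by
    left
    constructor
    · rw [hRe, hδ1]
      exact (Qd_iff hdodd hc1 hn1).mpr ⟨by omega, dc1n1⟩
    · rw [hRe, hδ1, hvw]
      refine (Qd_iff hdodd hc1 ho_vw).mpr ⟨by omega, ?_⟩
      rw [show c₁ * (n₁ + 2 ^ a * (n₂ - n₃)) = c₁ * n₁ + 2 ^ a * (c₁ * n₂ - c₁ * n₃) by ring]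
      exact dvd_add dc1n1 ((dvd_sub dc1n2 dc1n3).mul_left _)
  have P2 : Pd R (2 ^ M * n₁) (2 ^ M * (n₁ + 2 ^ a * n₂)) (2 ^ M * (2 ^ a * n₃))
      (2 ^ C * c₂) := by
    right; right
    constructor
    · rw [hRe, hw2]
      exact (Qd_iff hdodd hc2 hn3).mpr ⟨by omega, dc2n3⟩
    · rw [hRe, huv]
      refine (Qd_iff hdodd hc2 hn2.neg).mpr ⟨by omega, ?_⟩
      rw [mul_neg]
      exact dvd_neg.mpr dc2n2
  have P3 : Pd R (2 ^ M * n₁) (2 ^ M * (n₁ + 2 ^ a * n₂)) (2 ^ M * (2 ^ a * n₃))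
      (2 ^ C * (c₂ + 2 ^ a * c₃)) := by
    right; right
    constructor
    · rw [hRe, hw2]
      refine (Qd_iff hdodd ho_γ hn3).mpr ⟨by omega, ?_⟩
      rw [show (c₂ + 2 ^ a * c₃) * n₃ = c₂ * n₃ + 2 ^ a * (c₃ * n₃) by ring]
      exact dvd_add dc2n3 (dc3n3.mul_left _)
    · rw [hRe, huv]
      refine (Qd_iff hdodd ho_γ hn2.neg).mpr ⟨by omega, ?_⟩
      rw [show (c₂ + 2 ^ a * c₃) * -n₂ = -(c₂ * n₂) - 2 ^ a * (c₃ * n₂) by ring]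
      exact dvd_sub (dvd_neg.mpr dc2n2) (dc3n2.mul_left _)
  have P4 : Pd R (2 ^ M * n₁) (2 ^ M * (n₁ + 2 ^ a * n₂)) (2 ^ M * (2 ^ a * n₃))
      (2 ^ C * (2 ^ a * c₁) - 2 ^ C * c₂) := by
    right; right
    constructor
    · rw [hRe, hδ4, hw2]
      refine (Qd_iff hdodd ho_δ4 hn3).mpr ⟨by omega, ?_⟩
      rw [show (2 ^ a * c₁ - c₂) * n₃ = 2 ^ a * (c₁ * n₃) - c₂ * n₃ by ring]
      exact dvd_sub ((dc1n3).mul_left _) dc2n3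
    · rw [hRe, hδ4, huv]
      refine (Qd_iff hdodd ho_δ4 hn2.neg).mpr ⟨by omega, ?_⟩
      rw [show (2 ^ a * c₁ - c₂) * -n₂ = c₂ * n₂ - 2 ^ a * (c₁ * n₂) by ring]
      exact dvd_sub dc2n2 ((dc1n2).mul_left _)
  have P5 : Pd R (2 ^ M * n₁) (2 ^ M * (n₁ + 2 ^ a * n₂)) (2 ^ M * (2 ^ a * n₃))
      (2 ^ C * (2 ^ a * c₁) - 2 ^ C * (c₂ + 2 ^ a * c₃)) := by
    right; right
    constructor
    · rw [hRe, hδ5, hw2]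
      refine (Qd_iff hdodd ho_δ5 hn3).mpr ⟨by omega, ?_⟩
      rw [show (2 ^ a * c₁ - (c₂ + 2 ^ a * c₃)) * n₃ =
        2 ^ a * (c₁ * n₃ - c₃ * n₃) - c₂ * n₃ by ring]
      exact dvd_sub ((dvd_sub dc1n3 dc3n3).mul_left _) dc2n3
    · rw [hRe, hδ5, huv]
      refine (Qd_iff hdodd ho_δ5 hn2.neg).mpr ⟨by omega, ?_⟩
      rw [show (2 ^ a * c₁ - (c₂ + 2 ^ a * c₃)) * -n₂ =
        c₂ * n₂ - 2 ^ a * (c₁ * n₂ - c₃ * n₂) by ring]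
      exact dvd_sub dc2n2 ((dvd_sub dc1n2 dc3n2).mul_left _)
  have P6 : Pd R (2 ^ M * n₁) (2 ^ M * (n₁ + 2 ^ a * n₂)) (2 ^ M * (2 ^ a * n₃))
      (2 ^ C * c₂ - 2 ^ C * (c₂ + 2 ^ a * c₃)) := by
    left
    constructor
    · rw [hRe, hδ6]
      refine (Qd_iff hdodd hc3.neg hn1).mpr ⟨by omega, ?_⟩
      rw [neg_mul]
      exact dvd_neg.mpr dc3n1
    · rw [hRe, hδ6, hvw]
      refine (Qd_iff hdodd hc3.neg ho_vw).mpr ⟨by omega, ?_⟩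
      rw [show (-c₃) * (n₁ + 2 ^ a * (n₂ - n₃)) =
        -(c₃ * n₁) - 2 ^ a * (c₃ * n₂ - c₃ * n₃) by ring]
      exact dvd_sub (dvd_neg.mpr dc3n1) ((dvd_sub dc3n2 dc3n3).mul_left _)
  intro b hb b' hb' hbb
  simp only [Finset.mem_insert, Finset.mem_singleton] at hb hb'
  rcases hb with rfl | rfl | rfl | rfl <;> rcases hb' with rfl | rfl | rfl | rfl
  · exact absurd rfl hbb
  · exact Pd_congr (by ring) P1
  · exact Pd_congr (by ring) P2
  · exact Pd_congr (by ring) P3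
  · rw [sub_zero]; exact P1
  · exact absurd rfl hbb
  · exact P4
  · exact P5
  · rw [sub_zero]; exact P2
  · exact Pd_congr (by ring) P4
  · exact absurd rfl hbb
  · exact P6
  · rw [sub_zero]; exact P3
  · exact Pd_congr (by ring) P5
  · exact Pd_congr (by ring) P6
  · exact absurd rfl hbb

/-- characterization of the Hadamard pairs `(A, L)` of size `4` (both containing
`0`) with scaling factor `R ≥ 1`: `(1/R)·L` is a spectrum for `A` iff `R = 2^{C+M+a+1}·d`,
`A = 2^C·{0, 2^a c₁, c₂, c₂ + 2^a c₃}` and `L = 2^M·{0, n₁, n₁ + 2^a n₂, 2^a n₃}` with the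
`cᵢ, nᵢ` odd, `a ≥ 1`, `C, M ≥ 0`, and `d` divides `c₁n`, `c₃n`, `n₂c`, `n₃c`, where
`c = gcd(c₁,c₂,c₃)` and `n = gcd(n₁,n₂,n₃)`. -/
theorem hadamard_pair_size_four (A L : Finset ℤ) (hA : A.card = 4) (hL : L.card = 4)
    (h0A : (0 : ℤ) ∈ A) (h0L : (0 : ℤ) ∈ L) (R : ℤ) (hR : 1 ≤ R) :
    IsSpectrumFor A (L.image fun x : ℤ => (x : ℝ) / (R : ℝ)) ↔
    ∃ (C M : ℕ) (a : ℕ) (c₁ c₂ c₃ n₁ n₂ n₃ d : ℤ),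
      1 ≤ a ∧
      Odd c₁ ∧ Odd c₂ ∧ Odd c₃ ∧ Odd n₁ ∧ Odd n₂ ∧ Odd n₃ ∧
      R = 2 ^ (C + M + a + 1) * d ∧
      A = ({0, 2 ^ a * c₁, c₂, c₂ + 2 ^ a * c₃} : Finset ℤ).image (fun x => 2 ^ C * x) ∧
      L = ({0, n₁, n₁ + 2 ^ a * n₂, 2 ^ a * n₃} : Finset ℤ).image (fun x => 2 ^ M * x) ∧
      d ∣ c₁ * (Int.gcd n₁ (Int.gcd n₂ n₃) : ℤ) ∧
      d ∣ c₃ * (Int.gcd n₁ (Int.gcd n₂ n₃) : ℤ) ∧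
      d ∣ n₂ * (Int.gcd c₁ (Int.gcd c₂ c₃) : ℤ) ∧
      d ∣ n₃ * (Int.gcd c₁ (Int.gcd c₂ c₃) : ℤ) := by
  have hR0 : (R : ℝ) ≠ 0 := by
    have : (1 : ℝ) ≤ (R : ℝ) := by exact_mod_cast hR
    linarith
  have hinj : ∀ x ∈ L, ∀ y ∈ L, (x : ℝ) / (R : ℝ) = (y : ℝ) / (R : ℝ) → x = y := by
    intro x _ y _ hxy
    field_simp at hxy
    exact_mod_cast hxy
  constructor
  · rintro ⟨hcard, hsum⟩
    obtain ⟨ρ, D, hD, hRd⟩ := exists_odd_decomp R (by omega)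
    -- extract the elements of A and L
    have hA3 : (A.erase 0).card = 3 := by rw [Finset.card_erase_of_mem h0A, hA]
    obtain ⟨α, β, γ, hαβ, hαγ, hβγ, heA⟩ := Finset.card_eq_three.mp hA3
    have hA4 : A = {0, α, β, γ} := by rw [← Finset.insert_erase h0A, heA]
    have hα0 : α ≠ 0 := by
      have : α ∈ A.erase 0 := by rw [heA]; simp
      exact (Finset.mem_erase.mp this).1
    have hβ0 : β ≠ 0 := by
      have : β ∈ A.erase 0 := by rw [heA]; simp
      exact (Finset.mem_erase.mp this).1
    have hγ0 : γ ≠ 0 := by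
      have : γ ∈ A.erase 0 := by rw [heA]; simp
      exact (Finset.mem_erase.mp this).1
    have hL3 : (L.erase 0).card = 3 := by rw [Finset.card_erase_of_mem h0L, hL]
    obtain ⟨u, v, w, huv, huw, hvw, heL⟩ := Finset.card_eq_three.mp hL3
    have hL4 : L = {0, u, v, w} := by rw [← Finset.insert_erase h0L, heL]
    have hu0 : u ≠ 0 := by
      have : u ∈ L.erase 0 := by rw [heL]; simp
      exact (Finset.mem_erase.mp this).1
    have hv0 : v ≠ 0 := by
      have : v ∈ L.erase 0 := by rw [heL]; simp
      exact (Finset.mem_erase.mp this).1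
    have hw0 : w ≠ 0 := by
      have : w ∈ L.erase 0 := by rw [heL]; simp
      exact (Finset.mem_erase.mp this).1
    have hPd := spectrum_rows A L R hR u v w hL4 hu0 hv0 hw0 huv huw hvw hsum
    have hαA : α ∈ A := by rw [hA4]; simp
    have hβA : β ∈ A := by rw [hA4]; simp
    have hγA : γ ∈ A := by rw [hA4]; simp
    have g1 : Pd R u v w α := by
      have := hPd α hαA 0 h0A hα0
      rwa [sub_zero] at this
    have g2 : Pd R u v w β := by
      have := hPd β hβA 0 h0A hβ0
      rwa [sub_zero] at this
    have g3 : Pd R u v w γ := by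
      have := hPd γ hγA 0 h0A hγ0
      rwa [sub_zero] at this
    have g4 : Pd R u v w (α - β) := hPd α hαA β hβA hαβ
    have g5 : Pd R u v w (α - γ) := hPd α hαA γ hγA hαγ
    have g6 : Pd R u v w (β - γ) := hPd β hβA γ hγA hβγ
    rw [hRd] at g1 g2 g3 g4 g5 g6
    obtain ⟨C, M, a, c₁, c₂, c₃, n₁, n₂, n₃, k1, k2, k3, k4, k5, k6, k7, kρ, kA, kL, kd1, kd2, kd3⟩ :=
      arith_main ρ D hD α β γ u v w hαβ hαγ hβγ hα0 hβ0 hγ0 huv huw hvw hu0 hv0 hw0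
        g1 g2 g3 g4 g5 g6
    refine ⟨C, M, a, c₁, c₂, c₃, n₁, n₂, n₃, D, k1, k2, k3, k4, k5, k6, k7, ?_, ?_, ?_, ?_, ?_, ?_, ?_⟩
    · rw [hRd, kρ]
    · rw [hA4]; exact kA
    · rw [hL4]; exact kL
    · exact dvd_mul_gcd3 kd1.1 kd1.2.1 kd1.2.2
    · exact dvd_mul_gcd3 kd2.1 kd2.2.1 kd2.2.2
    · exact dvd_mul_gcd3 (by rw [mul_comm]; exact kd1.2.1) (by rw [mul_comm]; exact kd3.1)
        (by rw [mul_comm]; exact kd2.2.1)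
    · exact dvd_mul_gcd3 (by rw [mul_comm]; exact kd1.2.2) (by rw [mul_comm]; exact kd3.2)
        (by rw [mul_comm]; exact kd2.2.2)
  · rintro ⟨C, M, a, c₁, c₂, c₃, n₁, n₂, n₃, d, ha1, hc1, hc2, hc3, hn1, hn2, hn3, hRe,
      hAe, hLe, hd1, hd2, hd3, hd4⟩
    -- oddness of d
    have hgn : Odd ((Int.gcd n₁ (Int.gcd n₂ n₃) : ℤ)) := odd_of_dvd_odd (Int.gcd_dvd_left _ _) hn1
    have hdodd : Odd d := odd_of_dvd_odd hd1 (Int.odd_mul.mpr ⟨hc1, hgn⟩)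
    -- elementary divisibilities
    have hgdn1 : ((Int.gcd n₁ (Int.gcd n₂ n₃) : ℤ)) ∣ n₁ := Int.gcd_dvd_left _ _
    have hgdn2 : ((Int.gcd n₁ (Int.gcd n₂ n₃) : ℤ)) ∣ n₂ := (Int.gcd_dvd_right _ _).trans (Int.gcd_dvd_left _ _)
    have hgdn3 : ((Int.gcd n₁ (Int.gcd n₂ n₃) : ℤ)) ∣ n₃ := (Int.gcd_dvd_right _ _).trans (Int.gcd_dvd_right _ _)
    have hgdc1 : ((Int.gcd c₁ (Int.gcd c₂ c₃) : ℤ)) ∣ c₁ := Int.gcd_dvd_left _ _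
    have hgdc2 : ((Int.gcd c₁ (Int.gcd c₂ c₃) : ℤ)) ∣ c₂ := (Int.gcd_dvd_right _ _).trans (Int.gcd_dvd_left _ _)
    have hgdc3 : ((Int.gcd c₁ (Int.gcd c₂ c₃) : ℤ)) ∣ c₃ := (Int.gcd_dvd_right _ _).trans (Int.gcd_dvd_right _ _)
    have dc1n1 : d ∣ c₁ * n₁ := hd1.trans (mul_dvd_mul_left c₁ hgdn1)
    have dc1n2 : d ∣ c₁ * n₂ := hd1.trans (mul_dvd_mul_left c₁ hgdn2)
    have dc1n3 : d ∣ c₁ * n₃ := hd1.trans (mul_dvd_mul_left c₁ hgdn3)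
    have dc3n1 : d ∣ c₃ * n₁ := hd2.trans (mul_dvd_mul_left c₃ hgdn1)
    have dc3n2 : d ∣ c₃ * n₂ := hd2.trans (mul_dvd_mul_left c₃ hgdn2)
    have dc3n3 : d ∣ c₃ * n₃ := hd2.trans (mul_dvd_mul_left c₃ hgdn3)
    have dc2n2 : d ∣ c₂ * n₂ := by
      rw [mul_comm]; exact hd3.trans (mul_dvd_mul_left n₂ hgdc2)
    have dc2n3 : d ∣ c₂ * n₃ := by
      rw [mul_comm]; exact hd4.trans (mul_dvd_mul_left n₃ hgdc2)
    -- explicit forms of A and L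
    have hAset : A = {0, 2 ^ C * (2 ^ a * c₁), 2 ^ C * c₂, 2 ^ C * (c₂ + 2 ^ a * c₃)} := by
      rw [hAe]; simp only [Finset.image_insert, Finset.image_singleton, mul_zero]
    have hLset : L = {0, 2 ^ M * n₁, 2 ^ M * (n₁ + 2 ^ a * n₂), 2 ^ M * (2 ^ a * n₃)} := by
      rw [hLe]; simp only [Finset.image_insert, Finset.image_singleton, mul_zero]
    -- distinctness in L
    have hoddv : Odd (n₁ + 2 ^ a * n₂) := hn1.add_even (even_pow_mul ha1 _)
    have hp2M : ((2:ℤ) ^ M) ≠ 0 := by positivity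
    have hu0 : (2:ℤ) ^ M * n₁ ≠ 0 := mul_ne_zero hp2M (odd_ne_zero hn1)
    have hv0 : (2:ℤ) ^ M * (n₁ + 2 ^ a * n₂) ≠ 0 := mul_ne_zero hp2M (odd_ne_zero hoddv)
    have hw0 : (2:ℤ) ^ M * (2 ^ a * n₃) ≠ 0 :=
      mul_ne_zero hp2M (mul_ne_zero (by positivity) (odd_ne_zero hn3))
    have huv : (2:ℤ) ^ M * n₁ ≠ 2 ^ M * (n₁ + 2 ^ a * n₂) := by
      intro h
      have h2 := mul_left_cancel₀ hp2M h
      have h3 : (2:ℤ) ^ a * n₂ = 0 := by linarith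
      exact mul_ne_zero (by positivity : ((2:ℤ) ^ a) ≠ 0) (odd_ne_zero hn2) h3
    have huw : (2:ℤ) ^ M * n₁ ≠ 2 ^ M * (2 ^ a * n₃) := by
      intro h
      have h2 := mul_left_cancel₀ hp2M h
      exact (Int.not_even_iff_odd.mpr hn1) (h2 ▸ even_pow_mul ha1 n₃)
    have hvw : (2:ℤ) ^ M * (n₁ + 2 ^ a * n₂) ≠ 2 ^ M * (2 ^ a * n₃) := by
      intro h
      have h2 := mul_left_cancel₀ hp2M h
      exact (Int.not_even_iff_odd.mpr hoddv) (h2 ▸ even_pow_mul ha1 n₃)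
    have hrows := backward_rows R C M a c₁ c₂ c₃ n₁ n₂ n₃ d ha1 hc1 hc2 hc3 hn1 hn2 hn3 hdodd
      hRe dc1n1 dc1n2 dc1n3 dc3n1 dc3n2 dc3n3 dc2n2 dc2n3
    have hcards : (L.image fun x : ℤ => (x : ℝ) / (R : ℝ)).card = A.card := by
      rw [Finset.card_image_of_injOn (fun x hx y hy h => hinj x hx y hy h), hL, hA]
    refine ⟨hcards, ?_⟩
    intro b hb b' hb'
    by_cases hbb : b = b'
    · subst hbb
      rw [if_pos rfl]
      have hone : ∀ γ' ∈ (L.image fun x : ℤ => (x : ℝ) / (R : ℝ)),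
          Complex.exp (2 * Real.pi * Complex.I * (((b : ℤ) : ℂ) - ((b : ℤ) : ℂ)) * (γ' : ℂ)) = 1 := by
        intro γ' _
        simp [sub_self]
      rw [Finset.sum_congr rfl hone, Finset.sum_const, nsmul_eq_mul, mul_one, hcards]
    · rw [if_neg hbb, Finset.sum_image hinj, hLset,
        sum_four _ _ _ _ hu0 hv0 hw0 huv huw hvw]
      simp only [term_eq]
      rw [myE_zero]
      have hb2 : b ∈ ({0, 2 ^ C * (2 ^ a * c₁), 2 ^ C * c₂, 2 ^ C * (c₂ + 2 ^ a * c₃)} : Finset ℤ) := by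
        rw [← hAset]; exact hb
      have hb2' : b' ∈ ({0, 2 ^ C * (2 ^ a * c₁), 2 ^ C * c₂, 2 ^ C * (c₂ + 2 ^ a * c₃)} : Finset ℤ) := by
        rw [← hAset]; exact hb'
      exact row_sum_zero hR (hrows b hb2 b' hb2' hbb)
end
end

section
/- Let A ⊂ ℤ be a finite set with |A| = N, spectral with spectrum Γ ⊂ ℝ. Let Ω = A + [0,1] ⊂ ℝ and Λ = Γ + ℤ. Then the functions (1/√N)·e^{2πiλx}, λ ∈ Λ, restricted to Ω, form an orthonormal basis (Hilbert basis) of L²(Ω); that is, Ω is a spectral subset of ℝ with spectrum Λ. -/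
open Complex Real MeasureTheory

noncomputable section

/-- The set `Ω = A + [0,1] ⊂ ℝ`. -/
def OmegaOf (A : Finset ℤ) : Set ℝ :=
  {x : ℝ | ∃ a ∈ A, ∃ y ∈ Set.Icc (0 : ℝ) 1, x = (a : ℝ) + y}

/-- The set `Λ = Γ + ℤ ⊂ ℝ`. -/
def LambdaOf (Γ : Finset ℝ) : Set ℝ :=
  {x : ℝ | ∃ γ ∈ Γ, ∃ n : ℤ, x = γ + (n : ℝ)}

open scoped Matrix

namespace SpectralAux


def ec (μ x : ℝ) : ℂ := Complex.exp (2 * Real.pi * Complex.I * (μ : ℂ) * (x : ℂ))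

lemma ec_apply (μ x : ℝ) : ec μ x = Complex.exp (2 * Real.pi * Complex.I * (μ : ℂ) * (x : ℂ)) := rfl

lemma ec_add_left (μ ν x : ℝ) : ec (μ + ν) x = ec μ x * ec ν x := by
  rw [ec, ec, ec, ← Complex.exp_add]; push_cast; ring_nf

lemma ec_zero (x : ℝ) : ec 0 x = 1 := by simp [ec]

lemma ec_ne_zero (μ x : ℝ) : ec μ x ≠ 0 := Complex.exp_ne_zero _

lemma star_ec (μ x : ℝ) : star (ec μ x) = ec (-μ) x := by
  show (starRingEnd ℂ) (ec μ x) = ec (-μ) x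
  rw [ec, ec, ← Complex.exp_conj]; congr 1
  simp only [map_mul, Complex.conj_I, Complex.conj_ofReal, map_ofNat]
  push_cast; ring

lemma norm_ec (μ x : ℝ) : ‖ec μ x‖ = 1 := by
  rw [ec]
  have : (2 * Real.pi * Complex.I * (μ : ℂ) * (x : ℂ)) = ((2 * Real.pi * μ * x : ℝ) : ℂ) * Complex.I := by
    push_cast; ring
  rw [this, Complex.norm_exp_ofReal_mul_I]

lemma ec_int (n : ℤ) (m : ℤ) : ec n m = 1 := by
  rw [ec]
  have : (2 * Real.pi * Complex.I * ((n:ℝ) : ℂ) * ((m:ℝ) : ℂ)) = ((n * m : ℤ) : ℂ) * (2 * Real.pi * Complex.I) := by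
    push_cast; ring
  rw [this, Complex.exp_int_mul_two_pi_mul_I]

lemma ec_add_right (μ x y : ℝ) : ec μ (x + y) = ec μ x * ec μ y := by
  rw [ec, ec, ec, ← Complex.exp_add]; push_cast; ring_nf

lemma continuous_ec (μ : ℝ) : Continuous (ec μ) := by
  apply Complex.continuous_exp.comp
  exact (continuous_const.mul Complex.continuous_ofReal)


def SOf (A : Finset ℤ) : Set ℝ := ⋃ a ∈ A, Set.Ioc (a : ℝ) (a + 1)

lemma omega_eq (A : Finset ℤ) : OmegaOf A = ⋃ a ∈ A, Set.Icc (a : ℝ) (a + 1) := by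
  ext x
  simp only [OmegaOf, Set.mem_setOf_eq, Set.mem_iUnion, Set.mem_Icc, Set.mem_Ioc, exists_prop]
  constructor
  · rintro ⟨a, ha, y, ⟨hy0, hy1⟩, rfl⟩
    exact ⟨a, ha, by linarith, by linarith⟩
  · rintro ⟨a, ha, h1, h2⟩
    exact ⟨a, ha, x - a, ⟨by linarith, by linarith⟩, by ring⟩

lemma measurableSet_omega (A : Finset ℤ) : MeasurableSet (OmegaOf A) := by
  rw [omega_eq]
  exact A.measurableSet_biUnion fun a _ => measurableSet_Icc

lemma volume_omega_lt_top (A : Finset ℤ) : volume (OmegaOf A) < ⊤ := by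
  rw [omega_eq]
  refine lt_of_le_of_lt (measure_biUnion_finset_le A _) ?_
  have : ∀ a ∈ A, volume (Set.Icc (a : ℝ) (a + 1)) = 1 := by
    intro a _; rw [Real.volume_Icc]; norm_num
  rw [Finset.sum_congr rfl this]
  simp [lt_top_iff_ne_top]

instance finOmega (A : Finset ℤ) : IsFiniteMeasure (volume.restrict (OmegaOf A)) :=
  ⟨by rw [Measure.restrict_apply_univ]; exact volume_omega_lt_top A⟩

lemma restrict_omega_eq (A : Finset ℤ) :
    volume.restrict (OmegaOf A) = volume.restrict (SOf A) := by
  apply Measure.restrict_congr_set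
  rw [MeasureTheory.ae_eq_set]
  constructor
  · refine measure_mono_null (t := ⋃ a ∈ A, {(a : ℝ)}) ?_ ?_
    · intro x hx
      rw [omega_eq] at hx
      obtain ⟨hx1, hx2⟩ := hx
      simp only [Set.mem_iUnion, Set.mem_Icc, exists_prop] at hx1
      obtain ⟨a, ha, h1, h2⟩ := hx1
      simp only [SOf, Set.mem_iUnion, Set.mem_Ioc, exists_prop, not_exists, not_and] at hx2
      have := hx2 a ha
      have hxa : x = (a : ℝ) := by
        rcases eq_or_lt_of_le h1 with h | h
        · exact h.symm
        · exact absurd h2 (this h)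
      simp only [Set.mem_iUnion, Set.mem_singleton_iff, exists_prop]
      exact ⟨a, ha, hxa⟩
    · exact (measure_biUnion_null_iff A.countable_toSet).2 fun a _ => measure_singleton _
  · have : SOf A ⊆ OmegaOf A := by
      rw [omega_eq]
      refine Set.iUnion₂_mono fun a _ => Set.Ioc_subset_Icc_self
    rw [Set.diff_eq_empty.2 this]; simp

lemma pairwise_disj (A : Finset ℤ) :
    (A : Set ℤ).Pairwise (Function.onFun Disjoint fun a => Set.Ioc (a : ℝ) (a + 1)) := by
  intro a _ b _ hab
  apply Set.Ioc_disjoint_Ioc.2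
  rcases lt_or_gt_of_ne hab with h | h
  · have : (a : ℝ) + 1 ≤ b := by exact_mod_cast Int.add_one_le_iff.2 h
    refine le_trans (min_le_left _ _) (le_trans this (le_max_right _ _))
  · have : (b : ℝ) + 1 ≤ a := by exact_mod_cast Int.add_one_le_iff.2 h
    refine le_trans (min_le_right _ _) (le_trans this (le_max_left _ _))

lemma integral_omega (A : Finset ℤ) (F : ℝ → ℂ)
    (hF : ∀ a ∈ A, IntegrableOn F (Set.Ioc (a : ℝ) (a + 1)) volume) :
    ∫ x in OmegaOf A, F x = ∑ a ∈ A, ∫ x in Set.Ioc (a : ℝ) (a + 1), F x := by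
  rw [restrict_omega_eq, SOf]
  exact integral_biUnion_finset A (fun a _ => measurableSet_Ioc) (pairwise_disj A) hF

lemma integral_Ioc_shift (F : ℝ → ℂ) (a : ℝ) :
    ∫ x in Set.Ioc a (a + 1), F x = ∫ t in Set.Ioc (0:ℝ) 1, F (t + a) := by
  have hmp : MeasurePreserving (fun x : ℝ => x + a) volume volume :=
    measurePreserving_add_right volume a
  have hemb : MeasurableEmbedding (fun x : ℝ => x + a) :=
    (MeasurableEquiv.addRight a).measurableEmbedding
  have hset : (fun x : ℝ => x + a) ⁻¹' Set.Ioc a (a + 1) = Set.Ioc (0:ℝ) 1 := by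
    ext x
    simp only [Set.mem_preimage, Set.mem_Ioc]
    refine ⟨fun hx => ⟨by linarith [hx.1], by linarith [hx.2]⟩,
      fun hx => ⟨by linarith [hx.1], by linarith [hx.2]⟩⟩
  have := hmp.setIntegral_preimage_emb hemb F (Set.Ioc a (a + 1))
  rw [hset] at this
  rw [← this]

lemma shiftMP (a : ℝ) : MeasurePreserving (fun x : ℝ => x + a)
    (volume.restrict (Set.Ioc (0:ℝ) 1)) (volume.restrict (Set.Ioc a (a+1))) := by
  have base : MeasurePreserving (fun x : ℝ => x + a) volume volume :=
    measurePreserving_add_right volume a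
  have := base.restrict_preimage (s := Set.Ioc a (a+1)) measurableSet_Ioc
  convert this using 2
  ext x
  simp only [Set.mem_preimage, Set.mem_Ioc]
  constructor <;> intro h' <;> constructor <;> linarith [h'.1, h'.2]

lemma ae_shift (G : ℝ → ℂ) (hG : StronglyMeasurable G) (a : ℝ)
    (h : ∀ᵐ t ∂(volume.restrict (Set.Ioc (0:ℝ) 1)), G (t + a) = 0) :
    ∀ᵐ x ∂(volume.restrict (Set.Ioc a (a + 1))), G x = 0 := by
  have hmp := shiftMP a
  rw [← hmp.map_eq]
  rw [MeasureTheory.ae_map_iff hmp.measurable.aemeasurable]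
  · exact h
  · exact (hG.measurable (MeasurableSet.singleton 0))


lemma conjEnd_ec (μ x : ℝ) : (starRingEnd ℂ) (ec μ x) = ec (-μ) x := star_ec μ x

lemma ec_eq_ec {μ x ν y : ℝ} (h : μ * x = ν * y) : ec μ x = ec ν y := by
  have hc : ((μ:ℂ)) * (x:ℂ) = (ν:ℂ) * (y:ℂ) := by
    rw [← Complex.ofReal_mul, ← Complex.ofReal_mul, h]
  simp only [ec, mul_assoc, hc]

section Mat

variable {A : Finset ℤ} {Γ : Finset ℝ}

/-- the unitary-type matrix attached to the spectrum -/
def specMatrix (ε : {x // x ∈ A} ≃ {x // x ∈ Γ}) : Matrix {x // x ∈ A} {x // x ∈ A} ℂ :=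
  fun p q => ec ((p : ℤ) : ℝ) ((ε q : ℝ))

/-- the equivalence from `↥A` to `↥Γ` -/
def specEquiv (h : IsSpectrumFor A Γ) : {x // x ∈ A} ≃ {x // x ∈ Γ} :=
  Fintype.equivOfCardEq (by rw [Fintype.card_coe, Fintype.card_coe, h.1])

lemma spec_mul_conjTranspose (h : IsSpectrumFor A Γ) :
    specMatrix (specEquiv h) * (specMatrix (specEquiv h))ᴴ = (A.card : ℂ) • 1 := by
  ext p p'
  rw [Matrix.mul_apply]
  simp only [Matrix.conjTranspose_apply, specMatrix, star_ec]
  have e1 : ∀ q : {x // x ∈ A},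
      ec ((p : ℤ) : ℝ) ((specEquiv h q : ℝ)) * ec (-((p' : ℤ) : ℝ)) ((specEquiv h q : ℝ)) =
      ec (((p : ℤ) : ℝ) - ((p' : ℤ) : ℝ)) ((specEquiv h q : ℝ)) := by
    intro q; rw [← ec_add_left, sub_eq_add_neg]
  rw [Finset.sum_congr rfl fun q _ => e1 q]
  rw [Equiv.sum_comp (specEquiv h) (fun c : {x // x ∈ Γ} => ec (((p:ℤ):ℝ) - ((p':ℤ):ℝ)) (c : ℝ))]
  rw [Finset.sum_coe_sort Γ (fun γ => ec (((p:ℤ):ℝ) - ((p':ℤ):ℝ)) γ)]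
  have := h.2 p p.2 p' p'.2
  have e2 : ∀ γ ∈ Γ, ec (((p:ℤ):ℝ) - ((p':ℤ):ℝ)) γ =
      Complex.exp (2 * Real.pi * Complex.I * (((p : ℤ) : ℂ) - (((p' : ℤ)) : ℂ)) * (γ : ℂ)) := by
    intro γ _; rw [ec]; push_cast; ring_nf
  rw [Finset.sum_congr rfl e2, this]
  simp only [Matrix.smul_apply, Matrix.one_apply, Subtype.ext_iff, smul_eq_mul]
  split_ifs with h1
  · rw [mul_one]
  · rw [mul_zero]

lemma dual_orth (h : IsSpectrumFor A Γ) (hA : A.Nonempty) :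
    ∀ γ ∈ Γ, ∀ γ' ∈ Γ, ∑ a ∈ A, ec (γ' - γ) (a : ℝ) = if γ = γ' then (A.card : ℂ) else 0 := by
  intro γ hγ γ' hγ'
  set ε := specEquiv h
  set M := specMatrix ε with hM
  have hN : (A.card : ℂ) ≠ 0 := by
    simp only [ne_eq, Nat.cast_eq_zero, Finset.card_eq_zero]
    exact hA.ne_empty
  have h1 : M * ((A.card : ℂ)⁻¹ • Mᴴ) = 1 := by
    rw [Matrix.mul_smul, spec_mul_conjTranspose h, smul_smul, inv_mul_cancel₀ hN, one_smul]
  have h2 : ((A.card : ℂ)⁻¹ • Mᴴ) * M = 1 := mul_eq_one_comm.mp h1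
  have h3 : Mᴴ * M = (A.card : ℂ) • 1 := by
    calc Mᴴ * M = (A.card : ℂ) • (((A.card : ℂ)⁻¹ • Mᴴ) * M) := by
          rw [Matrix.smul_mul, smul_smul, mul_inv_cancel₀ hN, one_smul]
      _ = (A.card : ℂ) • (1 : Matrix _ _ ℂ) := by rw [h2]
  have h4 := congrFun (congrFun h3 (ε.symm ⟨γ, hγ⟩)) (ε.symm ⟨γ', hγ'⟩)
  rw [Matrix.mul_apply] at h4
  simp only [Matrix.conjTranspose_apply, hM, specMatrix, star_ec, Equiv.apply_symm_apply] at h4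
  have e1 : ∀ p : {x // x ∈ A},
      ec (-((p : ℤ) : ℝ)) γ * ec ((p : ℤ) : ℝ) γ' = ec (γ' - γ) ((p : ℤ) : ℝ) := by
    intro p
    rw [ec_eq_ec (show -((p : ℤ) : ℝ) * γ = (-γ) * ((p:ℤ):ℝ) by ring),
        ec_eq_ec (show ((p : ℤ) : ℝ) * γ' = γ' * ((p:ℤ):ℝ) by ring), ← ec_add_left]
    congr 1; ring
  rw [Finset.sum_congr rfl fun p _ => e1 p,
    Finset.sum_coe_sort A (fun a => ec (γ' - γ) (a : ℝ))] at h4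
  rw [h4]
  simp only [Matrix.smul_apply, Matrix.one_apply, smul_eq_mul]
  have : ε.symm ⟨γ, hγ⟩ = ε.symm ⟨γ', hγ'⟩ ↔ γ = γ' := by
    rw [ε.symm.injective.eq_iff, Subtype.mk_eq_mk]
  rw [if_congr this rfl rfl]
  split_ifs <;> simp

lemma vanish_of_orth (h : IsSpectrumFor A Γ) (hA : A.Nonempty) (w : ℤ → ℂ)
    (hw : ∀ γ ∈ Γ, ∑ a ∈ A, ec (-γ) (a : ℝ) * w a = 0) : ∀ a ∈ A, w a = 0 := by
  set ε := specEquiv h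
  set M := specMatrix ε with hM
  have hN : (A.card : ℂ) ≠ 0 := by
    simp only [ne_eq, Nat.cast_eq_zero, Finset.card_eq_zero]
    exact hA.ne_empty
  have h1 : ((A.card : ℂ)⁻¹ • M) * Mᴴ = 1 := by
    rw [Matrix.smul_mul, spec_mul_conjTranspose h, smul_smul, inv_mul_cancel₀ hN, one_smul]
  set v : {x // x ∈ A} → ℂ := fun p => w p with hv
  have hMv : Mᴴ.mulVec v = 0 := by
    funext q
    rw [Matrix.mulVec, dotProduct]
    simp only [Matrix.conjTranspose_apply, hM, specMatrix, star_ec]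
    have e1 : ∀ p : {x // x ∈ A},
        ec (-((p : ℤ) : ℝ)) ((ε q : ℝ)) * v p = ec (-((ε q : ℝ))) ((p : ℤ) : ℝ) * w p := by
      intro p; rw [ec_eq_ec (show -((p : ℤ) : ℝ) * ((ε q : ℝ)) = (-((ε q : ℝ))) * ((p:ℤ):ℝ) by ring)]
    rw [Finset.sum_congr rfl fun p _ => e1 p,
      Finset.sum_coe_sort A (fun a => ec (-((ε q : ℝ))) (a : ℝ) * w a)]
    exact hw (ε q) (ε q).2 |>.trans rfl
  have hv0 : v = 0 := by
    have : (((A.card : ℂ)⁻¹ • M) * Mᴴ).mulVec v = v := by rw [h1, Matrix.one_mulVec]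
    rw [← Matrix.mulVec_mulVec, hMv, Matrix.mulVec_zero] at this
    exact this.symm
  intro a ha
  exact congrFun hv0 ⟨a, ha⟩


lemma fact_zero_lt_one_real : Fact ((0:ℝ) < 1) := ⟨one_pos⟩

attribute [local instance] fact_zero_lt_one_real

lemma haar_eq_volume : (AddCircle.haarAddCircle : Measure (AddCircle (1:ℝ))) = volume := by
  rw [AddCircle.volume_eq_smul_haarAddCircle]; simp

lemma fourier_unique (φ : ℝ → ℂ) (hm : StronglyMeasurable φ)
    (hφ : MemLp φ 2 (volume.restrict (Set.Ioc (0:ℝ) 1)))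
    (h0 : ∀ n : ℤ, ∫ t in Set.Ioc (0:ℝ) 1, ec (-(n:ℝ)) t * φ t = 0) :
    φ =ᵐ[volume.restrict (Set.Ioc (0:ℝ) 1)] 0 := by
  set μ : Measure ℝ := volume.restrict (Set.Ioc (0:ℝ) 1) with hμ
  set Φ : AddCircle (1:ℝ) → ℂ := AddCircle.liftIoc 1 0 φ with hΦdef
  have hmk := AddCircle.measurePreserving_mk 1 0
  simp only [zero_add] at hmk
  -- hmk : MeasurePreserving mk μ volume
  have hcoe : ∀ x ∈ Set.Ioc (0:ℝ) 1, Φ ((x : ℝ) : AddCircle (1:ℝ)) = φ x := by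
    intro x hx
    exact AddCircle.liftIoc_coe_apply (by simpa using hx)
  have hΦm : StronglyMeasurable Φ := by
    have : Φ = (fun y : Set.Ioc (0:ℝ) (0+1) => φ y) ∘ (AddCircle.measurableEquivIoc 1 0) := rfl
    rw [this]
    exact (hm.comp_measurable measurable_subtype_coe).comp_measurable
      (AddCircle.measurableEquivIoc 1 0).measurable
  have hae : (fun x : ℝ => Φ ((x : ℝ) : AddCircle (1:ℝ))) =ᵐ[μ] φ := by
    filter_upwards [ae_restrict_mem measurableSet_Ioc] with x hx using hcoe x hx
  have hΦ2 : MemLp Φ 2 (volume : Measure (AddCircle (1:ℝ))) := by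
    rw [← hmk.map_eq]
    exact (memLp_map_measure_iff hΦm.aestronglyMeasurable
      hmk.measurable.aemeasurable).2 (hφ.ae_eq hae.symm)
  have hΦ2' : MemLp Φ 2 (AddCircle.haarAddCircle : Measure (AddCircle (1:ℝ))) := by
    rwa [haar_eq_volume]
  set F := hΦ2'.toLp Φ with hF
  have hFc : ∀ n : ℤ, fourierCoeff (⇑F) n = fourierCoeff Φ n := by
    intro n
    apply integral_congr_ae
    filter_upwards [hΦ2'.coeFn_toLp] with t ht
    rw [ht]
  have hΦc : ∀ n : ℤ, fourierCoeff Φ n = 0 := by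
    intro n
    rw [fourierCoeff, haar_eq_volume,
      ← AddCircle.integral_preimage 1 0 (fun z : AddCircle (1:ℝ) => fourier (-n) z • Φ z)]
    simp only [zero_add]
    rw [← h0 n]
    refine setIntegral_congr_fun measurableSet_Ioc fun x hx => ?_
    rw [fourier_coe_apply, hcoe x hx, smul_eq_mul]
    congr 2
    push_cast
    field_simp
  have hrepr : fourierBasis.repr F = 0 := by
    ext n
    rw [fourierBasis_repr, hFc n, hΦc n]
    rfl
  have hF0 : F = 0 := by
    apply fourierBasis.repr.injective
    rw [hrepr, map_zero]
  have hΦ0 : Φ =ᵐ[(AddCircle.haarAddCircle : Measure (AddCircle (1:ℝ)))] 0 := by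
    have h1 := hΦ2'.coeFn_toLp
    rw [← hF, hF0] at h1
    exact h1.symm.trans (Lp.coeFn_zero _ _ _)
  rw [haar_eq_volume, ← hmk.map_eq] at hΦ0
  have := ae_eq_comp hmk.measurable.aemeasurable hΦ0
  refine hae.symm.trans (this.trans ?_)
  rfl


end Mat

section IntegralComp

variable {A : Finset ℤ} {Γ : Finset ℝ}

lemma two_pi_I_mul_ne_zero {μ : ℝ} (hμ : μ ≠ 0) : (2 * Real.pi * Complex.I * (μ:ℂ)) ≠ 0 :=
  mul_ne_zero (mul_ne_zero (mul_ne_zero two_ne_zero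
    (Complex.ofReal_ne_zero.2 Real.pi_ne_zero)) Complex.I_ne_zero)
    (Complex.ofReal_ne_zero.2 hμ)

lemma integral_ec_Ioc_zero (a : ℝ) : ∫ x in Set.Ioc a (a + 1), ec 0 x = 1 := by
  simp only [ec_zero]
  rw [setIntegral_const]
  rw [Real.volume_real_Ioc]
  norm_num

lemma integral_ec_Ioc {μ : ℝ} (hμ : μ ≠ 0) (a : ℝ) :
    ∫ x in Set.Ioc a (a + 1), ec μ x =
      ec μ a * ((ec μ 1 - 1) / (2 * Real.pi * Complex.I * (μ:ℂ))) := by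
  have hc := two_pi_I_mul_ne_zero hμ
  rw [← intervalIntegral.integral_of_le (by linarith : a ≤ a + 1)]
  have h1 : ∀ x : ℝ, ec μ x = Complex.exp ((2 * Real.pi * Complex.I * (μ:ℂ)) * (x:ℂ)) :=
    fun x => rfl
  rw [intervalIntegral.integral_congr (fun x _ => h1 x)]
  rw [integral_exp_mul_complex hc]
  rw [← h1, ← h1]
  have h2 : ec μ (a + 1) = ec μ a * ec μ 1 := ec_add_right μ a 1
  rw [h2]
  field_simp

lemma integrableOn_ec (μ : ℝ) (a : ℝ) : IntegrableOn (ec μ) (Set.Ioc a (a + 1)) volume :=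
  (continuous_ec μ).integrableOn_Ioc

/-- the key orthogonality integral over `Ω`. -/
lemma integral_ec_omega (h : IsSpectrumFor A Γ) (hA : A.Nonempty)
    {γ γ' : ℝ} (hγ : γ ∈ Γ) (hγ' : γ' ∈ Γ) (n n' : ℤ) :
    ∫ x in OmegaOf A, ec ((γ' + (n':ℝ)) - (γ + (n:ℝ))) x =
      if γ + (n:ℝ) = γ' + (n':ℝ) then (A.card : ℂ) else 0 := by
  set μr : ℝ := (γ' + (n':ℝ)) - (γ + (n:ℝ)) with hμr
  rw [integral_omega A _ (fun a _ => integrableOn_ec μr a)]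
  by_cases hμ : μr = 0
  · rw [if_pos (by rw [← sub_eq_zero]; rw [hμr] at hμ; linarith)]
    rw [hμ]
    rw [Finset.sum_congr rfl fun (a : ℤ) _ => integral_ec_Ioc_zero (a:ℝ)]
    simp
  · rw [if_neg (fun hcon => hμ (by rw [hμr, hcon, sub_self]))]
    rw [Finset.sum_congr rfl fun (a : ℤ) _ => integral_ec_Ioc hμ (a:ℝ)]
    have hdecomp : ∀ a : ℤ, ec μr (a:ℝ) = ec (γ' - γ) (a:ℝ) := by
      intro a
      have : μr = (γ' - γ) + ((n' - n : ℤ) : ℝ) := by rw [hμr]; push_cast; ring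
      rw [this, ec_add_left, ec_int (n' - n) a, mul_one]
    rw [Finset.sum_congr rfl fun (a : ℤ) _ => by rw [hdecomp a]]
    rw [← Finset.sum_mul]
    by_cases hγγ : γ = γ'
    · -- the factor `ec μr 1 - 1` vanishes since `μr` is a nonzero integer
      have : ec μr 1 = 1 := by
        have hint : μr = ((n' - n : ℤ) : ℝ) := by rw [hμr, hγγ]; push_cast; ring
        rw [hint]
        have := ec_int (n' - n) 1
        simpa using this
      rw [this]
      simp
    · -- the sum vanishes by dual orthogonality
      have := dual_orth h hA γ hγ γ' hγ'
      rw [if_neg hγγ] at this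
      rw [this, zero_mul]

end IntegralComp

end SpectralAux

open SpectralAux

/-- if `A ⊂ ℤ`, `|A| = N`, is spectral with spectrum `Γ`, then
`Ω = A + [0,1]` is a spectral subset of `ℝ` with spectrum `Λ = Γ + ℤ`: the functions
`(1/√N)·e^{2πiλx}`, `λ ∈ Λ`, form an orthonormal basis (Hilbert basis) of `L²(Ω)`. -/
theorem union_of_intervals_spectral (A : Finset ℤ) (hA : A.Nonempty)
    (Γ : Finset ℝ) (h : IsSpectrumFor A Γ) :
    ∃ f : LambdaOf Γ → Lp ℂ 2 (volume.restrict (OmegaOf A)),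
      (∀ l : LambdaOf Γ,
        (f l : ℝ → ℂ) =ᵐ[volume.restrict (OmegaOf A)]
          fun x : ℝ => ((1 / Real.sqrt A.card : ℝ) : ℂ) *
            Complex.exp (2 * Real.pi * Complex.I * ((l : ℝ) : ℂ) * (x : ℂ))) ∧
      Orthonormal ℂ f ∧
      (Submodule.span ℂ (Set.range f)).topologicalClosure = ⊤ := by
  classical
  set μΩ : Measure ℝ := volume.restrict (OmegaOf A) with hμΩ
  have hN0 : (0:ℝ) < A.card := by exact_mod_cast (Finset.card_pos.2 hA : 0 < A.card)
  set c : ℝ := 1 / Real.sqrt (A.card : ℕ) with hc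
  have hsq : (0:ℝ) < Real.sqrt A.card := Real.sqrt_pos.2 hN0
  have hcpos : 0 < c := by rw [hc]; positivity
  have hcc : ((c:ℂ) * (c:ℂ)) * ((A.card : ℕ) : ℂ) = 1 := by
    have hr : c * c * (A.card : ℝ) = 1 := by
      rw [hc, div_mul_div_comm, one_mul, Real.mul_self_sqrt hN0.le]
      field_simp
    calc ((c:ℂ) * (c:ℂ)) * ((A.card : ℕ) : ℂ) = ((c * c * (A.card:ℝ) : ℝ) : ℂ) := by
          push_cast; ring
      _ = 1 := by rw [hr]; simp
  set E : LambdaOf Γ → ℝ → ℂ := fun l x => (c:ℂ) * ec (l:ℝ) x with hE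
  have hEcont : ∀ l, Continuous (E l) := fun l => continuous_const.mul (continuous_ec _)
  have hmem : ∀ l, MemLp (E l) 2 μΩ := by
    intro l
    refine MemLp.of_bound (hEcont l).aestronglyMeasurable c (ae_of_all _ fun x => ?_)
    rw [hE]
    simp only [norm_mul, norm_ec, mul_one, Complex.norm_real]
    rw [Real.norm_eq_abs, abs_of_pos hcpos]
  have hinner : ∀ (l : LambdaOf Γ) (v : Lp ℂ 2 μΩ),
      (inner ℂ ((hmem l).toLp (E l)) v : ℂ) = ∫ x, (starRingEnd ℂ) (E l x) * v x ∂μΩ := by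
    intro l v
    rw [MeasureTheory.L2.inner_def]
    apply integral_congr_ae
    filter_upwards [(hmem l).coeFn_toLp] with x h1
    rw [h1]
    rw [RCLike.inner_apply]; ring
  refine ⟨fun l => (hmem l).toLp (E l), fun l => (hmem l).coeFn_toLp, ?_, ?_⟩
  · -- Orthonormality
    rw [orthonormal_iff_ite]
    intro l l'
    rw [hinner]
    obtain ⟨γ, hγ, n, hl⟩ := l.2
    obtain ⟨γ', hγ', n', hl'⟩ := l'.2
    have hin2 : ∫ x, (starRingEnd ℂ) (E l x) * ((hmem l').toLp (E l')) x ∂μΩ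
        = ∫ x, ((c:ℂ) * (c:ℂ)) * ec ((γ' + (n':ℝ)) - (γ + (n:ℝ))) x ∂μΩ := by
      apply integral_congr_ae
      filter_upwards [(hmem l').coeFn_toLp] with x hx
      rw [hx, hE]
      simp only
      rw [map_mul, Complex.conj_ofReal, conjEnd_ec,
        show ((γ' + (n':ℝ)) - (γ + (n:ℝ))) = -(l:ℝ) + (l':ℝ) by rw [hl, hl']; ring,
        ec_add_left]
      ring
    rw [hin2, MeasureTheory.integral_const_mul]
    rw [show (∫ x, ec ((γ' + (n':ℝ)) - (γ + (n:ℝ))) x ∂μΩ)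
        = if γ + (n:ℝ) = γ' + (n':ℝ) then ((A.card : ℕ) : ℂ) else 0 from
      integral_ec_omega h hA hγ hγ' n n']
    have hiff : (l = l') ↔ (γ + (n:ℝ) = γ' + (n':ℝ)) := by
      rw [Subtype.ext_iff, hl, hl']
    by_cases heq : l = l'
    · rw [if_pos heq, if_pos (hiff.1 heq), hcc]
    · rw [if_neg heq, if_neg (fun hh => heq (hiff.2 hh)), mul_zero]
  · -- Completeness
    rw [Submodule.topologicalClosure_eq_top_iff, Submodule.eq_bot_iff]
    intro g hg
    have hGm : StronglyMeasurable (⇑g) := Lp.stronglyMeasurable g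
    have hGmem : MemLp (⇑g) 2 μΩ := Lp.memLp g
    have hg0 : ∀ l : LambdaOf Γ, (inner ℂ ((hmem l).toLp (E l)) g : ℂ) = 0 := fun l =>
      (Submodule.mem_orthogonal _ g).1 hg _ (Submodule.subset_span (Set.mem_range_self l))
    have hcne : ((c : ℝ) : ℂ) ≠ 0 := by
      simp only [ne_eq, Complex.ofReal_eq_zero]
      exact hcpos.ne'
    -- Step 1: integral conditions
    have key : ∀ γ ∈ Γ, ∀ n : ℤ, ∫ x, ec (-(γ + (n:ℝ))) x * g x ∂μΩ = 0 := by
      intro γ hγ n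
      set l : LambdaOf Γ := ⟨γ + (n:ℝ), γ, hγ, n, rfl⟩ with hldef
      have h1 := hg0 l
      rw [hinner] at h1
      have hpt : (fun x : ℝ => (starRingEnd ℂ) (E l x) * g x)
          = fun x => (c:ℂ) * (ec (-(γ + (n:ℝ))) x * g x) := by
        funext x
        rw [hE]
        simp only
        rw [map_mul, Complex.conj_ofReal, conjEnd_ec]
        rw [mul_assoc]
      rw [hpt, MeasureTheory.integral_const_mul] at h1
      exact (mul_eq_zero.mp h1).resolve_left hcne
    -- Integrability facts
    have hFmem : ∀ μr : ℝ, MemLp (fun x => ec μr x * g x) 2 μΩ := by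
      intro μr
      refine hGmem.of_le
        (((continuous_ec μr).stronglyMeasurable.mul hGm).aestronglyMeasurable)
        (ae_of_all _ fun x => ?_)
      rw [norm_mul, norm_ec, one_mul]
    have hsubΩ : ∀ a : ℤ, a ∈ A → Set.Ioc (a:ℝ) (a+1) ⊆ OmegaOf A := by
      intro a ha x hx
      rw [omega_eq]
      exact Set.mem_biUnion ha (Set.Ioc_subset_Icc_self hx)
    haveI : ∀ a : ℤ, IsFiniteMeasure (volume.restrict (Set.Ioc (a:ℝ) (a+1))) := by
      intro a
      refine ⟨?_⟩
      rw [Measure.restrict_apply_univ, Real.volume_Ioc]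
      exact ENNReal.ofReal_lt_top
    have hrestr : ∀ (F : ℝ → ℂ) (a : ℤ), a ∈ A → MemLp F 2 μΩ →
        MemLp F 2 (volume.restrict (Set.Ioc (a:ℝ) (a+1))) := by
      intro F a ha hF
      have h1 := hF.restrict (Set.Ioc (a:ℝ) (a+1))
      rw [hμΩ, Measure.restrict_restrict measurableSet_Ioc,
        Set.inter_eq_self_of_subset_left (hsubΩ a ha)] at h1
      exact h1
    have hFinth : ∀ (μr : ℝ) (a : ℤ), a ∈ A →
        IntegrableOn (fun x => ec μr x * g x) (Set.Ioc (a:ℝ) (a+1)) volume := by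
      intro μr a ha
      exact (hrestr _ a ha (hFmem μr)).integrable one_le_two
    have hshiftInt : ∀ (μr : ℝ) (a : ℤ), a ∈ A →
        Integrable (fun t => ec μr (t + (a:ℝ)) * g (t + (a:ℝ)))
          (volume.restrict (Set.Ioc (0:ℝ) 1)) := by
      intro μr a ha
      exact ((shiftMP (a:ℝ)).integrable_comp (hFinth μr a ha).aestronglyMeasurable).2
        (hFinth μr a ha)
    have hGshift : ∀ a : ℤ, a ∈ A → MemLp (fun t => g (t + (a:ℝ))) 2
        (volume.restrict (Set.Ioc (0:ℝ) 1)) := by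
      intro a ha
      exact (hrestr _ a ha hGmem).comp_measurePreserving (shiftMP (a:ℝ))
    have hφmem : ∀ γ : ℝ, MemLp (fun t => ∑ a ∈ A, ec (-γ) (t + (a:ℝ)) * g (t + (a:ℝ))) 2
        (volume.restrict (Set.Ioc (0:ℝ) 1)) := by
      intro γ
      refine memLp_finsetSum A fun a ha => ?_
      refine (hGshift a ha).of_le ?_ (ae_of_all _ fun t => ?_)
      · refine ((Measurable.stronglyMeasurable ?_).mul ?_).aestronglyMeasurable
        · exact ((continuous_ec (-γ)).measurable.comp (measurable_add_const _))
        · exact (hGm.measurable.comp (measurable_add_const _)).stronglyMeasurable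
      · rw [norm_mul, norm_ec, one_mul]
    have hφm : ∀ γ : ℝ, StronglyMeasurable
        (fun t => ∑ a ∈ A, ec (-γ) (t + (a:ℝ)) * g (t + (a:ℝ))) := by
      intro γ
      refine Measurable.stronglyMeasurable ?_
      refine Finset.measurable_sum A fun a _ => ?_
      exact ((continuous_ec (-γ)).measurable.comp (measurable_add_const _)).mul
        (hGm.measurable.comp (measurable_add_const _))
    -- Step 2: Fourier coefficients of φγ vanish
    have hcoeff : ∀ γ ∈ Γ, ∀ n : ℤ, ∫ t in Set.Ioc (0:ℝ) 1,
        ec (-(n:ℝ)) t * (∑ a ∈ A, ec (-γ) (t + (a:ℝ)) * g (t + (a:ℝ))) = 0 := by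
      intro γ hγ n
      have h1 := key γ hγ n
      rw [show (∫ x, ec (-(γ + (n:ℝ))) x * g x ∂μΩ)
          = ∫ x in OmegaOf A, ec (-(γ + (n:ℝ))) x * g x from rfl] at h1
      rw [integral_omega A _ (fun a ha => hFinth _ a ha)] at h1
      rw [Finset.sum_congr rfl (fun (a : ℤ) _ =>
        integral_Ioc_shift (fun x => ec (-(γ + (n:ℝ))) x * g x) (a:ℝ))] at h1
      rw [← integral_finset_sum A (fun a ha => hshiftInt _ a ha)] at h1
      rw [← h1]
      refine setIntegral_congr_fun measurableSet_Ioc fun t _ => ?_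
      rw [Finset.mul_sum]
      refine Finset.sum_congr rfl fun a _ => ?_
      have e1 : ec (-(γ + (n:ℝ))) (t + (a:ℝ)) =
          ec (-γ) (t + (a:ℝ)) * (ec (-(n:ℝ)) t * ec (-(n:ℝ)) (a:ℝ)) := by
        rw [← ec_add_right, ← ec_add_left]
        congr 1
        ring
      have e2 : ec (-(n:ℝ)) ((a:ℤ):ℝ) = 1 := by
        have := ec_int (-n) a
        rwa [Int.cast_neg] at this
      rw [e1, e2, mul_one]
      ring
    -- Step 3: apply Fourier uniqueness
    have hφ0 : ∀ γ ∈ Γ, (fun t => ∑ a ∈ A, ec (-γ) (t + (a:ℝ)) * g (t + (a:ℝ)))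
        =ᵐ[volume.restrict (Set.Ioc (0:ℝ) 1)] 0 := by
      intro γ hγ
      exact fourier_unique _ (hφm γ) (hφmem γ) (hcoeff γ hγ)
    -- Step 4: combine over γ and kill G
    have hae1 : ∀ᵐ t ∂(volume.restrict (Set.Ioc (0:ℝ) 1)),
        ∀ γ ∈ Γ, ∑ a ∈ A, ec (-γ) (t + (a:ℝ)) * g (t + (a:ℝ)) = 0 := by
      rw [Filter.eventually_all_finset]
      intro γ hγ
      filter_upwards [hφ0 γ hγ] with t ht
      simpa using ht
    have hae2 : ∀ a : ℤ, a ∈ A → ∀ᵐ t ∂(volume.restrict (Set.Ioc (0:ℝ) 1)),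
        (⇑g) (t + (a:ℝ)) = 0 := by
      intro a ha
      filter_upwards [hae1] with t ht
      refine vanish_of_orth h hA (fun m : ℤ => g (t + (m:ℝ))) ?_ a ha
      intro γ hγ
      have h2 := ht γ hγ
      have h3 : ∑ a' ∈ A, ec (-γ) (t + (a':ℝ)) * g (t + (a':ℝ))
          = ec (-γ) t * ∑ a' ∈ A, ec (-γ) ((a':ℤ):ℝ) * g (t + (a':ℝ)) := by
        rw [Finset.mul_sum]
        refine Finset.sum_congr rfl fun a' _ => ?_
        rw [ec_add_right]
        ring
      rw [h3] at h2
      exact (mul_eq_zero.mp h2).resolve_left (ec_ne_zero _ _)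
    have hae3' : ∀ᵐ x ∂(volume.restrict (SOf A)), (⇑g : ℝ → ℂ) x = 0 := by
      rw [SOf, ae_restrict_biUnion_finset_iff]
      intro a ha
      exact ae_shift _ hGm (a:ℝ) (hae2 a ha)
    rw [← restrict_omega_eq A] at hae3'
    exact Lp.eq_zero_iff_ae_eq_zero.2 hae3'
end
end

section
/- Let Ω be a bounded Lebesgue measurable subset of ℝ of positive measure, and let U : ℝ → U(L²(Ω)) be a one-parameter group of unitary operators on L²(Ω) (U(s+t) = U(s)U(t), U(0) = I) such that for every f ∈ L²(Ω) and every t ∈ ℝ, (U(t)f)(x) = f(x+t) for almost every x ∈ Ω ∩ (Ω − t). If E ⊂ Ω is Lebesgue measurable and t_0 ∈ ℝ satisfies E + t_0 ⊂ Ω, then U(−t_0)χ_E = χ_{E+t_0} in L²(Ω). -/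
open Complex Real MeasureTheory

noncomputable section

open scoped ENNReal NNReal

/-- let `Ω ⊂ ℝ` be bounded, measurable, of positive measure, and let
`(U(t))_{t∈ℝ}` be a one-parameter group of unitary operators on `L²(Ω)` acting as local
translations: `(U(t)f)(x) = f(x+t)` for a.e. `x ∈ Ω ∩ (Ω − t)`. If `E ⊆ Ω` is measurable and
`E + t₀ ⊆ Ω`, then `U(−t₀)χ_E = χ_{E+t₀}` in `L²(Ω)`. -/
theorem local_translation_of_indicator (Ω : Set ℝ)
    (hΩb : Bornology.IsBounded Ω) (hΩm : MeasurableSet Ω)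
    (hΩpos : 0 < volume Ω)
    (U : ℝ → (Lp ℂ 2 (volume.restrict Ω) ≃ₗᵢ[ℂ] Lp ℂ 2 (volume.restrict Ω)))
    (hUgroup : ∀ (s t : ℝ) (f : Lp ℂ 2 (volume.restrict Ω)), U (s + t) f = U s (U t f))
    (hUid : ∀ f : Lp ℂ 2 (volume.restrict Ω), U 0 f = f)
    (hUloc : ∀ (f : Lp ℂ 2 (volume.restrict Ω)) (t : ℝ),
      ∀ᵐ x ∂(volume.restrict Ω), x + t ∈ Ω → (U t f : ℝ → ℂ) x = (f : ℝ → ℂ) (x + t))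
    (E : Set ℝ) (hE : MeasurableSet E) (hEΩ : E ⊆ Ω) (t₀ : ℝ)
    (hEt₀ : (fun x => x + t₀) '' E ⊆ Ω)
    (g : Lp ℂ 2 (volume.restrict Ω))
    (hg : (g : ℝ → ℂ) =ᵐ[volume.restrict Ω] Set.indicator E fun _ => (1 : ℂ)) :
    (U (-t₀) g : ℝ → ℂ) =ᵐ[volume.restrict Ω]
      Set.indicator ((fun x => x + t₀) '' E) fun _ => (1 : ℂ) := by
  classical
  set F : Set ℝ := (fun x => x + t₀) '' E with hFdef
  have hFeq : F = (fun x => x - t₀) ⁻¹' E := by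
    ext x
    constructor
    · rintro ⟨a, ha, rfl⟩
      simpa using ha
    · intro hx
      exact ⟨x - t₀, hx, by ring⟩
  have hFm : MeasurableSet F := by
    rw [hFeq]
    exact hE.preimage (measurable_id.sub_const t₀)
  have hvolF : volume F = volume E := by
    rw [hFeq]
    simpa using
      (measurePreserving_sub_right volume t₀).measure_preimage hE.nullMeasurableSet
  -- step 1: local translation
  have h1 : ∀ᵐ x ∂(volume.restrict Ω), x - t₀ ∈ Ω →
      (U (-t₀) g : ℝ → ℂ) x = (g : ℝ → ℂ) (x - t₀) := by
    filter_upwards [hUloc g (-t₀)] with x hx hm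
    have : x + -t₀ ∈ Ω := by simpa [sub_eq_add_neg] using hm
    simpa [sub_eq_add_neg] using hx this
  -- step 2: transport hg by translation
  have hg0 : ∀ᵐ y ∂volume, y ∈ Ω → (g : ℝ → ℂ) y = Set.indicator E (fun _ => (1 : ℂ)) y :=
    (ae_restrict_iff' hΩm).mp (hg : ∀ᵐ y ∂(volume.restrict Ω),
      (g : ℝ → ℂ) y = Set.indicator E (fun _ => (1 : ℂ)) y)
  have h2 : ∀ᵐ x ∂volume, x - t₀ ∈ Ω →
      (g : ℝ → ℂ) (x - t₀) = Set.indicator E (fun _ => (1 : ℂ)) (x - t₀) :=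
    (measurePreserving_sub_right volume t₀).quasiMeasurePreserving.tendsto_ae.eventually hg0
  have h2' : ∀ᵐ x ∂(volume.restrict Ω), x - t₀ ∈ Ω →
      (g : ℝ → ℂ) (x - t₀) = Set.indicator E (fun _ => (1 : ℂ)) (x - t₀) :=
    ae_restrict_of_ae h2
  -- h = 1 a.e. on F
  have ha : ∀ᵐ x ∂(volume.restrict Ω), x ∈ F → (U (-t₀) g : ℝ → ℂ) x = 1 := by
    filter_upwards [h1, h2'] with x hx1 hx2 hxF
    have hxE : x - t₀ ∈ E := by rwa [hFeq] at hxF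
    have hxΩ : x - t₀ ∈ Ω := hEΩ hxE
    rw [hx1 hxΩ, hx2 hxΩ, Set.indicator_of_mem hxE]
  -- norm equality
  have hnorm : ‖U (-t₀) g‖ = ‖g‖ := (U (-t₀)).norm_map g
  have hsn : eLpNorm (U (-t₀) g : ℝ → ℂ) 2 (volume.restrict Ω)
      = eLpNorm (g : ℝ → ℂ) 2 (volume.restrict Ω) := by
    rw [Lp.norm_def, Lp.norm_def] at hnorm
    exact (ENNReal.toReal_eq_toReal_iff' (Lp.eLpNorm_ne_top _) (Lp.eLpNorm_ne_top _)).mp hnorm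
  have hL : (∫⁻ x, ((‖(U (-t₀) g : ℝ → ℂ) x‖₊ : ℝ≥0∞)) ^ (2 : ℕ) ∂(volume.restrict Ω))
      = ∫⁻ x, ((‖(g : ℝ → ℂ) x‖₊ : ℝ≥0∞)) ^ (2 : ℕ) ∂(volume.restrict Ω) := by
    have e1 := eLpNorm_eq_lintegral_rpow_enorm_toReal (f := (U (-t₀) g : ℝ → ℂ))
      (μ := volume.restrict Ω) two_ne_zero ENNReal.ofNat_ne_top
    have e2 := eLpNorm_eq_lintegral_rpow_enorm_toReal (f := (g : ℝ → ℂ))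
      (μ := volume.restrict Ω) two_ne_zero ENNReal.ofNat_ne_top
    rw [e1, e2] at hsn
    have h22 : ((2 : ℝ≥0∞).toReal) = (2 : ℝ) := by norm_num
    rw [h22] at hsn
    have := congrArg (· ^ (2 : ℝ)) hsn
    simp only [← ENNReal.rpow_natCast, ← ENNReal.rpow_mul] at this ⊢
    norm_num at this ⊢
    convert this using 2 <;> norm_num <;> rfl
  -- RHS = volume E
  have hR : (∫⁻ x, ((‖(g : ℝ → ℂ) x‖₊ : ℝ≥0∞)) ^ (2 : ℕ) ∂(volume.restrict Ω)) = volume E := by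
    have : (∫⁻ x, ((‖(g : ℝ → ℂ) x‖₊ : ℝ≥0∞)) ^ (2 : ℕ) ∂(volume.restrict Ω))
        = ∫⁻ x, Set.indicator E (fun _ => (1 : ℝ≥0∞)) x ∂(volume.restrict Ω) := by
      refine lintegral_congr_ae ?_
      filter_upwards [hg] with x hx
      rw [hx]
      by_cases hxE : x ∈ E
      · simp [Set.indicator_of_mem hxE]
      · simp [Set.indicator_of_notMem hxE]
    rw [this, lintegral_indicator hE]
    simp [Measure.restrict_restrict hE, Set.inter_eq_self_of_subset_left hEΩ]
  -- integral over F
  have hIF : (∫⁻ x in F, ((‖(U (-t₀) g : ℝ → ℂ) x‖₊ : ℝ≥0∞)) ^ (2 : ℕ) ∂(volume.restrict Ω))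
      = volume E := by
    have : (∫⁻ x in F, ((‖(U (-t₀) g : ℝ → ℂ) x‖₊ : ℝ≥0∞)) ^ (2 : ℕ) ∂(volume.restrict Ω))
        = ∫⁻ _ in F, 1 ∂(volume.restrict Ω) := by
      refine lintegral_congr_ae ?_
      filter_upwards [ae_restrict_of_ae ha, ae_restrict_mem hFm] with x hx hxF
      rw [hx hxF]; simp
    rw [this, setLIntegral_one, Measure.restrict_apply hFm,
      Set.inter_eq_self_of_subset_left hEt₀, hvolF]
  have hfin : volume E ≠ ⊤ :=
    (lt_of_le_of_lt (measure_mono hEΩ) hΩb.measure_lt_top).ne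
  have hsplit := lintegral_add_compl
    (fun x => ((‖(U (-t₀) g : ℝ → ℂ) x‖₊ : ℝ≥0∞)) ^ (2 : ℕ)) hFm (μ := volume.restrict Ω)
  have hrest : (∫⁻ x in Fᶜ, ((‖(U (-t₀) g : ℝ → ℂ) x‖₊ : ℝ≥0∞)) ^ (2 : ℕ)
      ∂(volume.restrict Ω)) = 0 := by
    have h0 : volume E + (∫⁻ x in Fᶜ, ((‖(U (-t₀) g : ℝ → ℂ) x‖₊ : ℝ≥0∞)) ^ (2 : ℕ)
        ∂(volume.restrict Ω)) = volume E := by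
      nth_rewrite 1 [← hIF]
      exact hsplit.trans (hL.trans hR)
    exact (ENNReal.add_right_inj hfin).mp (by rw [add_zero]; exact h0)
  have hmeas : AEMeasurable (fun x => ((‖(U (-t₀) g : ℝ → ℂ) x‖₊ : ℝ≥0∞)) ^ (2 : ℕ))
      ((volume.restrict Ω).restrict Fᶜ) :=
    ((Lp.aestronglyMeasurable (U (-t₀) g)).restrict.enorm).pow_const 2
  have hzero : ∀ᵐ x ∂((volume.restrict Ω).restrict Fᶜ),
      ((‖(U (-t₀) g : ℝ → ℂ) x‖₊ : ℝ≥0∞)) ^ (2 : ℕ) = 0 :=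
    (lintegral_eq_zero_iff' hmeas).mp hrest
  have hc : ∀ᵐ x ∂(volume.restrict Ω), x ∈ Fᶜ → (U (-t₀) g : ℝ → ℂ) x = 0 := by
    rw [← ae_restrict_iff' hFm.compl]
    filter_upwards [hzero] with x hx
    have h0 : (‖(U (-t₀) g : ℝ → ℂ) x‖₊ : ℝ≥0∞) = 0 := by
      simpa [pow_eq_zero_iff] using hx
    simpa using h0
  filter_upwards [ha, hc] with x hx1 hx2
  by_cases hxF : x ∈ F
  · rw [hx1 hxF, Set.indicator_of_mem hxF]
  · rw [hx2 hxF, Set.indicator_of_notMem hxF]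
end
end

section
/- Let Ω be a bounded Lebesgue measurable subset of ℝ of finite positive measure |Ω|, and let Λ ⊂ ℝ be such that the functions |Ω|^{−1/2}·e^{2πiλx}, λ ∈ Λ, form an orthonormal basis of L²(Ω). For t ∈ ℝ let U_Λ(t) be the unique bounded operator on L²(Ω) with U_Λ(t)e_λ = e^{2πiλt}·e_λ for all λ ∈ Λ, where e_λ(x) = e^{2πiλx}. Then each U_Λ(t) is unitary, U_Λ is a one-parameter group, and for every f ∈ L²(Ω) and every t ∈ ℝ, (U_Λ(t)f)(x) = f(x+t) for almost every x ∈ Ω ∩ (Ω − t); that is, U_Λ is a unitary group of local translations on Ω. -/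
open Complex Real MeasureTheory

noncomputable section

namespace LocalTransAux

variable {ι : Type*}

lemma two_toReal : ((2 : ENNReal)).toReal = 2 := by norm_num

lemma memdiag (c : ι → ℂ) (hc : ∀ i, ‖c i‖ = 1) (f : lp (fun _ : ι => ℂ) 2) :
    Memℓp (fun i => c i * f i) 2 := by
  apply memℓp_gen
  refine ((lp.memℓp f).summable (by norm_num)).congr fun i => ?_
  simp [norm_mul, hc i]

/-- diagonal multiplication as a linear map on ℓ². -/
def diagL (c : ι → ℂ) (hc : ∀ i, ‖c i‖ = 1) :
    lp (fun _ : ι => ℂ) 2 →ₗ[ℂ] lp (fun _ : ι => ℂ) 2 where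
  toFun f := ⟨fun i => c i * f i, memdiag c hc f⟩
  map_add' f g := by
    apply lp.ext
    funext i
    simp [mul_add]
    rfl
  map_smul' a f := by
    apply lp.ext
    funext i
    simp [mul_smul_comm]
    ring

@[simp] lemma diagL_apply (c : ι → ℂ) (hc : ∀ i, ‖c i‖ = 1) (f : lp (fun _ : ι => ℂ) 2)
    (i : ι) : (diagL c hc f : ∀ _ : ι, ℂ) i = c i * f i := rfl

lemma diagL_norm (c : ι → ℂ) (hc : ∀ i, ‖c i‖ = 1) (f : lp (fun _ : ι => ℂ) 2) :
    ‖diagL c hc f‖ = ‖f‖ := by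
  rw [lp.norm_eq_tsum_rpow (by norm_num) (diagL c hc f),
    lp.norm_eq_tsum_rpow (by norm_num) f]
  congr 1
  apply tsum_congr
  intro i
  simp [norm_mul, hc i]

lemma norm_inv_one {z : ℂ} (h : ‖z‖ = 1) : ‖z⁻¹‖ = 1 := by
  rw [norm_inv, h]; norm_num

/-- diagonal multiplication by unimodular coefficients as unitary on ℓ². -/
def diagLi (c : ι → ℂ) (hc : ∀ i, ‖c i‖ = 1) :
    lp (fun _ : ι => ℂ) 2 ≃ₗᵢ[ℂ] lp (fun _ : ι => ℂ) 2 where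
  toLinearMap := diagL c hc
  invFun := diagL (fun i => (c i)⁻¹) (fun i => norm_inv_one (hc i))
  left_inv f := by
    apply lp.ext
    funext i
    have hz : c i ≠ 0 := by intro h0; have := hc i; rw [h0] at this; simp at this
    simp [inv_mul_cancel_left₀ hz]
  right_inv f := by
    apply lp.ext
    funext i
    have hz : c i ≠ 0 := by intro h0; have := hc i; rw [h0] at this; simp at this
    simp [mul_inv_cancel_left₀ hz]
  norm_map' := diagL_norm c hc

@[simp] lemma diagLi_apply (c : ι → ℂ) (hc : ∀ i, ‖c i‖ = 1) (f : lp (fun _ : ι => ℂ) 2)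
    (i : ι) : (diagLi c hc f : ∀ _ : ι, ℂ) i = c i * f i := rfl


variable {α : Type*} [MeasurableSpace α] {μ ν : Measure α}

/-- restriction to a smaller measure as a continuous linear map on L². -/
def restrictCLM (hle : ν ≤ μ) : Lp ℂ 2 μ →L[ℂ] Lp ℂ 2 ν :=
  LinearMap.mkContinuous
    { toFun := fun f => ((Lp.memLp f).mono_measure hle).toLp f
      map_add' := fun f g => by
        rw [← MemLp.toLp_add]
        exact MemLp.toLp_congr _ _ ((Lp.coeFn_add f g).filter_mono (ae_mono hle))
      map_smul' := fun a f => by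
        simp only [RingHom.id_apply]
        rw [← MemLp.toLp_const_smul]
        exact MemLp.toLp_congr _ _ ((Lp.coeFn_smul a f).filter_mono (ae_mono hle)) }
    1 (fun f => by
      rw [one_mul]
      simp only [LinearMap.coe_mk, AddHom.coe_mk]
      rw [MeasureTheory.Lp.norm_toLp _ ((Lp.memLp f).mono_measure hle), Lp.norm_def]
      exact ENNReal.toReal_mono (Lp.eLpNorm_ne_top f)
        (eLpNorm_mono_measure _ hle))

lemma restrictCLM_coeFn (hle : ν ≤ μ) (f : Lp ℂ 2 μ) :
    restrictCLM hle f =ᵐ[ν] f := MemLp.coeFn_toLp ((Lp.memLp f).mono_measure hle)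


section Ubase
variable {ι H : Type*} [NormedAddCommGroup H] [InnerProductSpace ℂ H]

/-- the diagonal unitary associated to a Hilbert basis and unimodular coefficients. -/
def Ubase (b : HilbertBasis ι ℂ H) (c : ι → ℂ) (hc : ∀ i, ‖c i‖ = 1) : H ≃ₗᵢ[ℂ] H :=
  (b.repr.trans (diagLi c hc)).trans b.repr.symm

lemma Ubase_repr (b : HilbertBasis ι ℂ H) (c : ι → ℂ) (hc : ∀ i, ‖c i‖ = 1) (f : H) :
    b.repr (Ubase b c hc f) = diagLi c hc (b.repr f) := by
  simp [Ubase, LinearIsometryEquiv.trans_apply]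

lemma Ubase_basis (b : HilbertBasis ι ℂ H) (c : ι → ℂ) (hc : ∀ i, ‖c i‖ = 1) (i : ι) :
    Ubase b c hc (b i) = c i • b i := by
  classical
  apply b.repr.injective
  rw [Ubase_repr, _root_.map_smul, b.repr_self]
  apply lp.ext
  funext j
  rw [lp.coeFn_smul]
  by_cases h : j = i
  · subst h
    simp [lp.single_apply_self]
  · simp [lp.single_apply_ne _ _ _ h, Pi.single_apply, h]

lemma Ubase_comp (b : HilbertBasis ι ℂ H) (c c' c'' : ι → ℂ) (hc : ∀ i, ‖c i‖ = 1)
    (hc' : ∀ i, ‖c' i‖ = 1) (hc'' : ∀ i, ‖c'' i‖ = 1)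
    (hcc : ∀ i, c'' i = c i * c' i) (f : H) :
    Ubase b c'' hc'' f = Ubase b c hc (Ubase b c' hc' f) := by
  apply b.repr.injective
  rw [Ubase_repr, Ubase_repr, Ubase_repr]
  apply lp.ext
  funext i
  simp only [diagLi_apply, hcc, mul_assoc]

lemma Ubase_id (b : HilbertBasis ι ℂ H) (c : ι → ℂ) (hc : ∀ i, ‖c i‖ = 1)
    (h1 : ∀ i, c i = 1) (f : H) : Ubase b c hc f = f := by
  apply b.repr.injective
  rw [Ubase_repr]
  apply lp.ext
  funext i
  simp only [diagLi_apply, h1, one_mul]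

end Ubase

theorem localAux (Ω : Set ℝ) (hΩm : MeasurableSet Ω) (Λ : Set ℝ)
    (e : Λ → Lp ℂ 2 (volume.restrict Ω))
    (he : ∀ l : Λ, (e l : ℝ → ℂ) =ᵐ[volume.restrict Ω]
      fun x : ℝ => ((1 / Real.sqrt (volume Ω).toReal : ℝ) : ℂ) *
        Complex.exp (2 * Real.pi * Complex.I * ((l : ℝ) : ℂ) * (x : ℂ)))
    (hdense : (Submodule.span ℂ (Set.range e)).topologicalClosure = ⊤)
    (t : ℝ)
    (V : Lp ℂ 2 (volume.restrict Ω) ≃ₗᵢ[ℂ] Lp ℂ 2 (volume.restrict Ω))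
    (hV : ∀ l : Λ, V (e l) =
      Complex.exp (2 * Real.pi * Complex.I * ((l : ℝ) : ℂ) * (t : ℂ)) • e l)
    (f : Lp ℂ 2 (volume.restrict Ω)) :
    ∀ᵐ x ∂(volume.restrict Ω), x + t ∈ Ω → (V f : ℝ → ℂ) x = (f : ℝ → ℂ) (x + t) := by
  have hτm : Measurable (fun x : ℝ => x + t) := measurable_add_const t
  have hΩtm : MeasurableSet ((fun x : ℝ => x + t) ⁻¹' Ω) := hΩm.preimage hτm
  set Ωt : Set ℝ := (fun x : ℝ => x + t) ⁻¹' Ω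
  have hpres : MeasurePreserving (fun x : ℝ => x + t) (volume.restrict Ωt)
      (volume.restrict Ω) :=
    (measurePreserving_add_right volume t).restrict_preimage hΩm
  have hle1 : volume.restrict (Ωt ∩ Ω) ≤ volume.restrict Ω :=
    Measure.restrict_mono Set.inter_subset_right le_rfl
  have hle2 : volume.restrict (Ωt ∩ Ω) ≤ volume.restrict Ωt :=
    Measure.restrict_mono Set.inter_subset_left le_rfl
  set ν : Measure ℝ := volume.restrict (Ωt ∩ Ω)
  set A : Lp ℂ 2 (volume.restrict Ω) →L[ℂ] Lp ℂ 2 ν :=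
    (restrictCLM hle1).comp V.toContinuousLinearEquiv.toContinuousLinearMap with hAdef
  set B : Lp ℂ 2 (volume.restrict Ω) →L[ℂ] Lp ℂ 2 ν :=
    (restrictCLM hle2).comp
      (Lp.compMeasurePreservingₗᵢ ℂ (fun x : ℝ => x + t) hpres).toContinuousLinearMap with hBdef
  have hA : ∀ g : Lp ℂ 2 (volume.restrict Ω), (A g : ℝ → ℂ) =ᵐ[ν] (V g : ℝ → ℂ) :=
    fun g => restrictCLM_coeFn hle1 (V g)
  have hB : ∀ g : Lp ℂ 2 (volume.restrict Ω),
      (B g : ℝ → ℂ) =ᵐ[ν] fun x => (g : ℝ → ℂ) (x + t) := by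
    intro g
    refine (restrictCLM_coeFn hle2 _).trans ?_
    exact (Lp.coeFn_compMeasurePreserving g hpres).filter_mono (ae_mono hle2)
  have hpull : ∀ {f₁ f₂ : ℝ → ℂ}, f₁ =ᵐ[volume.restrict Ω] f₂ →
      (fun x => f₁ (x + t)) =ᵐ[ν] fun x => f₂ (x + t) := by
    intro f₁ f₂ h
    exact (hpres.quasiMeasurePreserving.ae_eq_comp h).filter_mono (ae_mono hle2)
  have hAB : A = B := by
    have hdense' : Dense ((Submodule.span ℂ (Set.range e) :
        Submodule ℂ (Lp ℂ 2 (volume.restrict Ω))) : Set (Lp ℂ 2 (volume.restrict Ω))) :=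
      Submodule.dense_iff_topologicalClosure_eq_top.mpr hdense
    have heq : Set.EqOn ⇑A ⇑B ((Submodule.span ℂ (Set.range e) :
        Submodule ℂ (Lp ℂ 2 (volume.restrict Ω))) : Set (Lp ℂ 2 (volume.restrict Ω))) := by
      intro x hx
      induction hx using Submodule.span_induction with
      | mem x hx =>
        obtain ⟨l, rfl⟩ := hx
        apply Lp.ext
        have h1 : (A (e l) : ℝ → ℂ) =ᵐ[ν] fun x =>
            Complex.exp (2 * Real.pi * Complex.I * ((l : ℝ) : ℂ) * (t : ℂ)) *
            (((1 / Real.sqrt (volume Ω).toReal : ℝ) : ℂ) *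
            Complex.exp (2 * Real.pi * Complex.I * ((l : ℝ) : ℂ) * (x : ℂ))) := by
          refine (hA (e l)).trans ?_
          rw [hV]
          refine ((Lp.coeFn_smul _ (e l)).filter_mono (ae_mono hle1)).trans ?_
          filter_upwards [(he l).filter_mono (ae_mono hle1)] with x hx
          simp [hx]
        have h2 : (B (e l) : ℝ → ℂ) =ᵐ[ν] fun x =>
            (((1 / Real.sqrt (volume Ω).toReal : ℝ) : ℂ) *
            Complex.exp (2 * Real.pi * Complex.I * ((l : ℝ) : ℂ) * ((x : ℂ) + (t : ℂ)))) := by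
          refine (hB (e l)).trans ?_
          filter_upwards [hpull (he l)] with x hx
          rw [hx]
          push_cast
          ring_nf
        refine h1.trans (Filter.EventuallyEq.symm ?_)
        refine h2.trans ?_
        filter_upwards with x
        rw [show (2 * Real.pi * Complex.I * ((l : ℝ) : ℂ) * ((x : ℂ) + (t : ℂ)))
            = 2 * Real.pi * Complex.I * ((l : ℝ) : ℂ) * (x : ℂ)
            + 2 * Real.pi * Complex.I * ((l : ℝ) : ℂ) * (t : ℂ) by ring,
          Complex.exp_add]
        ring
      | zero => simp
      | add x y hx hy ihx ihy => simp [map_add, ihx, ihy]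
      | smul a x hx ih => simp [_root_.map_smul, ih]
    apply ContinuousLinearMap.coeFn_injective
    exact Continuous.ext_on hdense' A.continuous B.continuous heq
  have hae : (V f : ℝ → ℂ) =ᵐ[ν] fun x => (f : ℝ → ℂ) (x + t) := by
    refine (hA f).symm.trans ?_
    rw [hAB]
    exact hB f
  refine ae_imp_of_ae_restrict (s := Ωt) ?_
  rwa [Measure.restrict_restrict hΩtm]


/-- the unimodular multiplier function. -/
def cfun (Λ : Set ℝ) (t : ℝ) (l : Λ) : ℂ :=
  Complex.exp (2 * Real.pi * Complex.I * ((l : ℝ) : ℂ) * (t : ℂ))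

lemma cfun_norm (Λ : Set ℝ) (t : ℝ) (l : Λ) : ‖cfun Λ t l‖ = 1 := by
  have h1 : cfun Λ t l = Complex.exp (((2 * Real.pi * (l : ℝ) * t : ℝ) : ℂ) * Complex.I) := by
    unfold cfun; congr 1; push_cast; ring
  rw [h1, Complex.norm_exp_ofReal_mul_I]

lemma cfun_mul (Λ : Set ℝ) (s t : ℝ) (l : Λ) : cfun Λ (s + t) l = cfun Λ s l * cfun Λ t l := by
  unfold cfun
  rw [← Complex.exp_add]
  congr 1; push_cast; ring

lemma cfun_zero (Λ : Set ℝ) (l : Λ) : cfun Λ 0 l = 1 := by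
  simp [cfun]


end LocalTransAux

open LocalTransAux in
/-- let `Ω ⊂ ℝ` be bounded, measurable, of finite positive measure, and let
`Λ ⊂ ℝ` be such that the functions `|Ω|^{−1/2}·e^{2πiλx}`, `λ ∈ Λ`, form an orthonormal basis
of `L²(Ω)`. Then there is a one-parameter group `U_Λ` of unitary operators on `L²(Ω)` with
`U_Λ(t)e_λ = e^{2πiλt}·e_λ`, and `U_Λ` is a group of local translations:
`(U_Λ(t)f)(x) = f(x+t)` for a.e. `x ∈ Ω ∩ (Ω − t)`. -/
theorem spectrum_gives_local_translation_group (Ω : Set ℝ)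
    (hΩb : Bornology.IsBounded Ω) (hΩm : MeasurableSet Ω)
    (hΩpos : 0 < volume Ω) (Λ : Set ℝ)
    (e : Λ → Lp ℂ 2 (volume.restrict Ω))
    (he : ∀ l : Λ, (e l : ℝ → ℂ) =ᵐ[volume.restrict Ω]
      fun x : ℝ => ((1 / Real.sqrt (volume Ω).toReal : ℝ) : ℂ) *
        Complex.exp (2 * Real.pi * Complex.I * ((l : ℝ) : ℂ) * (x : ℂ)))
    (horth : Orthonormal ℂ e)
    (hdense : (Submodule.span ℂ (Set.range e)).topologicalClosure = ⊤) :
    ∃ U : ℝ → (Lp ℂ 2 (volume.restrict Ω) ≃ₗᵢ[ℂ] Lp ℂ 2 (volume.restrict Ω)),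
      (∀ (t : ℝ) (l : Λ), U t (e l) =
        Complex.exp (2 * Real.pi * Complex.I * ((l : ℝ) : ℂ) * (t : ℂ)) • e l) ∧
      (∀ (s t : ℝ) (f : Lp ℂ 2 (volume.restrict Ω)), U (s + t) f = U s (U t f)) ∧
      (∀ f : Lp ℂ 2 (volume.restrict Ω), U 0 f = f) ∧
      (∀ (f : Lp ℂ 2 (volume.restrict Ω)) (t : ℝ),
        ∀ᵐ x ∂(volume.restrict Ω), x + t ∈ Ω → (U t f : ℝ → ℂ) x = (f : ℝ → ℂ) (x + t)) := by
  have hbe : ∀ l : Λ, HilbertBasis.mk horth hdense.ge l = e l := by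
    intro l
    rw [HilbertBasis.coe_mk]
  refine ⟨fun t => Ubase (HilbertBasis.mk horth hdense.ge) (cfun Λ t) (cfun_norm Λ t),
    ?_, ?_, ?_, ?_⟩
  · intro t l
    rw [← hbe l, Ubase_basis]
    rfl
  · intro s t f
    exact Ubase_comp _ (cfun Λ s) (cfun Λ t) (cfun Λ (s + t)) (cfun_norm Λ s) (cfun_norm Λ t)
      (cfun_norm Λ (s + t)) (cfun_mul Λ s t) f
  · intro f
    exact Ubase_id _ (cfun Λ 0) (cfun_norm Λ 0) (cfun_zero Λ) f
  · intro f t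
    refine localAux Ω hΩm Λ e he hdense t _ ?_ f
    intro l
    rw [← hbe l, Ubase_basis]
    rfl
end
end
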